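/- arXiv:1706.05706 — 6 statements merged into one kernel-verified Lean document; each statement's English description precedes it below -/
import Mathlib

section
/- (Thompson–McEnteggert) Let M be an n-by-n normal matrix with spectral decomposition M = Z Λ Z*, where Λ = diag(λ₁,…,λₙ) and Z = (z₁ … zₙ) is unitary. If λⱼ is a simple eigenvalue of M, then Adj(λⱼ I - M) = χ'_M(λⱼ) · zⱼ zⱼ*, where χ_M is the characteristic polynomial of M and χ'_M its derivative. -/
open Matrix Polynomial
open scoped BigOperators

lemma charpoly_unitary_conj {n : ℕ} (Z D : Matrix (Fin n) (Fin n) ℂ)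
    (hZZ : Z * Zᴴ = 1) :
    (Z * D * Zᴴ).charpoly = D.charpoly := by
  have hmap : (Z * Zᴴ).map (C : ℂ →+* ℂ[X]) = 1 := by rw [hZZ]; simp
  unfold Matrix.charpoly
  have hch : charmatrix (Z * D * Zᴴ) =
      Z.map (C : ℂ →+* ℂ[X]) * charmatrix D * Zᴴ.map (C : ℂ →+* ℂ[X]) := by
    unfold charmatrix
    simp only [Matrix.mul_sub, Matrix.sub_mul, RingHom.mapMatrix_apply]
    congr 1
    · have hd : Matrix.scalar (Fin n) (X : ℂ[X]) =
          (X : ℂ[X]) • (1 : Matrix (Fin n) (Fin n) ℂ[X]) := by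
        ext i k
        by_cases h : i = k <;> simp [h, Matrix.one_apply, Matrix.scalar_apply,
          Matrix.diagonal_apply]
      rw [hd, Matrix.mul_smul, Matrix.mul_one, Matrix.smul_mul, ← Matrix.map_mul, hmap]
    · rw [← Matrix.map_mul, ← Matrix.map_mul]
  rw [hch, det_mul, det_mul]
  have hdet : (Z.map (C : ℂ →+* ℂ[X])).det * (Zᴴ.map (C : ℂ →+* ℂ[X])).det = 1 := by
    rw [← det_mul, ← Matrix.map_mul, hmap, det_one]
  calc (Z.map (C : ℂ →+* ℂ[X])).det * (charmatrix D).det * (Zᴴ.map (C : ℂ →+* ℂ[X])).det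
      = (Z.map (C : ℂ →+* ℂ[X])).det * (Zᴴ.map (C : ℂ →+* ℂ[X])).det * (charmatrix D).det := by
        ring
    _ = (charmatrix D).det := by rw [hdet, one_mul]

/-- Thompson–McEnteggert formula: if `M = Z Λ Z*` is a spectral decomposition of the
normal matrix `M` and `λⱼ` is a simple eigenvalue, then
`Adj(λⱼ I - M) = χ'_M(λⱼ) · zⱼ zⱼ*`. -/
theorem stmt_2 (n : ℕ) (M Z : Matrix (Fin n) (Fin n) ℂ) (lam : Fin n → ℂ)
    (hZ : Z ∈ Matrix.unitaryGroup (Fin n) ℂ)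
    (hM : M = Z * Matrix.diagonal lam * Zᴴ)
    (j : Fin n) (hsimple : ∀ i : Fin n, i ≠ j → lam i ≠ lam j) :
    (lam j • (1 : Matrix (Fin n) (Fin n) ℂ) - M).adjugate =
      Polynomial.eval (lam j) (Polynomial.derivative M.charpoly) •
        Matrix.vecMulVec (fun i => Z i j) (fun i => (starRingEnd ℂ) (Z i j)) := by
  have hZZ : Z * Zᴴ = 1 := by
    have := Matrix.mem_unitaryGroup_iff.mp hZ
    exact this
  have hZZ' : Zᴴ * Z = 1 := by
    have := Matrix.mem_unitaryGroup_iff'.mp hZ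
    exact this
  set c : ℂ := ∏ k ∈ Finset.univ.erase j, (lam j - lam k) with hc
  -- charpoly of M
  have hcp : M.charpoly = ∏ i : Fin n, (X - C (lam i)) := by
    rw [hM, charpoly_unitary_conj Z _ hZZ]
    rw [Matrix.charpoly_of_upperTriangular _ (Matrix.blockTriangular_diagonal lam)]
    simp
  -- derivative evaluation
  have hsplit : Multiset.map lam Finset.univ.val =
      lam j ::ₘ Multiset.map lam (Finset.univ.val.erase j) := by
    rw [← Multiset.map_cons, Multiset.cons_erase (Finset.mem_univ j)]
  have hderiv : Polynomial.eval (lam j) (Polynomial.derivative M.charpoly) = c := by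
    have hmem : lam j ∈ Multiset.map lam Finset.univ.val :=
      Multiset.mem_map_of_mem lam (Finset.mem_univ j)
    have hprod : (∏ i : Fin n, (X - C (lam i))) =
        (Multiset.map (fun a => X - C a) (Multiset.map lam Finset.univ.val)).prod := by
      rw [Multiset.map_map]; rfl
    rw [hcp, hprod, eval_multiset_prod_X_sub_C_derivative hmem, hsplit,
      Multiset.erase_cons_head, Multiset.map_map, hc]
    rw [Finset.prod_eq_multiset_prod, Finset.erase_val]
    rfl
  -- the matrix λⱼ I - M  as a conjugated diagonal
  have hmat : lam j • (1 : Matrix (Fin n) (Fin n) ℂ) - M =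
      Z * Matrix.diagonal (fun i => lam j - lam i) * Zᴴ := by
    have hdiag : Matrix.diagonal (fun i => lam j - lam i) =
        lam j • (1 : Matrix (Fin n) (Fin n) ℂ) - Matrix.diagonal lam := by
      ext i k
      by_cases h : i = k <;> simp [h, Matrix.diagonal_apply, Matrix.one_apply]
    rw [hdiag, hM, Matrix.mul_sub, Matrix.sub_mul, Matrix.mul_smul, Matrix.mul_one,
      Matrix.smul_mul, hZZ]
  -- adjugate of unitary
  have hadjZ : (Z : Matrix (Fin n) (Fin n) ℂ).adjugate = Z.det • Zᴴ := by
    have := Matrix.mul_adjugate Z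
    calc Z.adjugate = (Zᴴ * Z) * Z.adjugate := by rw [hZZ', one_mul]
      _ = Zᴴ * (Z * Z.adjugate) := by rw [Matrix.mul_assoc]
      _ = Z.det • Zᴴ := by rw [this, Matrix.mul_smul, Matrix.mul_one]
  have hadjZH : (Zᴴ : Matrix (Fin n) (Fin n) ℂ).adjugate = Zᴴ.det • Z := by
    have := Matrix.mul_adjugate Zᴴ
    calc Zᴴ.adjugate = (Z * Zᴴ) * Zᴴ.adjugate := by rw [hZZ, one_mul]
      _ = Z * (Zᴴ * Zᴴ.adjugate) := by rw [Matrix.mul_assoc]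
      _ = Zᴴ.det • Z := by rw [this, Matrix.mul_smul, Matrix.mul_one]
  have hdet1 : Zᴴ.det * Z.det = 1 := by
    rw [← det_mul, hZZ', det_one]
  -- adjugate of the diagonal matrix
  have hadjD : (Matrix.diagonal (fun i => lam j - lam i)).adjugate =
      c • Matrix.single j j (1 : ℂ) := by
    rw [Matrix.adjugate_diagonal]
    ext i k
    by_cases hik : i = k
    · subst hik
      by_cases hij : i = j
      · subst hij
        simp [Matrix.diagonal_apply, Matrix.single, hc]
      · have h0 : ∏ k ∈ Finset.univ.erase i, (lam j - lam k) = 0 := by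
          apply Finset.prod_eq_zero (Finset.mem_erase.mpr ⟨(Ne.symm hij), Finset.mem_univ j⟩)
          simp
        simp only [Matrix.diagonal_apply_eq, h0, Matrix.smul_apply, Matrix.single,
          Matrix.of_apply, smul_eq_mul]
        rw [if_neg (fun h => hij (h.1.symm))]
        simp
    · simp only [Matrix.diagonal_apply_ne _ hik, Matrix.smul_apply, Matrix.single,
        Matrix.of_apply, smul_eq_mul]
      rw [if_neg (fun h => hik (h.1.symm.trans h.2))]
      simp
  -- conjugated std basis matrix is vecMulVec
  have hvmv : Z * Matrix.single j j (1 : ℂ) * Zᴴ =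
      Matrix.vecMulVec (fun i => Z i j) (fun i => (starRingEnd ℂ) (Z i j)) := by
    ext i k
    rw [Matrix.mul_apply, Finset.sum_eq_single j]
    · rw [Matrix.mul_single_apply_same, Matrix.conjTranspose_apply,
        Matrix.vecMulVec_apply]
      simp [RCLike.star_def]
    · intro b _ hb
      rw [Matrix.mul_single_apply_of_ne 1 j j i b hb Z, zero_mul]
    · simp
  -- put it together
  rw [hmat, Matrix.adjugate_mul_distrib, Matrix.adjugate_mul_distrib,
    hadjZ, hadjZH, hadjD, hderiv]
  rw [← hvmv]
  simp only [Matrix.smul_mul, Matrix.mul_smul]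
  rw [smul_smul, smul_smul, ← Matrix.mul_assoc]
  congr 1
  rw [mul_comm Zᴴ.det Z.det] at hdet1
  calc Z.det * c * Zᴴ.det = c * (Z.det * Zᴴ.det) := by ring
    _ = c := by rw [hdet1, mul_one]
end

section
/- Let U be an n-by-n unitary matrix with simple eigenvalues whose eigenvectors all have nonzero k-th component, and let S be the diagonal matrix obtained from the identity by replacing the (k,k) entry with β ∈ S^1 \ {1}. Then U and US have no common eigenvalue. -/
open Matrix Polynomial

lemma stmt_3_aux_eig {n : ℕ} (M : Matrix (Fin n) (Fin n) ℂ) (μ : ℂ) (h : μ ∈ spectrum ℂ M) :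
    ∃ v ≠ 0, M.mulVec v = μ • v := by
  rw [spectrum.mem_iff] at h
  rw [Matrix.isUnit_iff_isUnit_det, isUnit_iff_ne_zero, not_not] at h
  obtain ⟨v, hv0, hv⟩ := (Matrix.exists_mulVec_eq_zero_iff).mpr h
  refine ⟨v, hv0, ?_⟩
  have h1 : (algebraMap ℂ (Matrix (Fin n) (Fin n) ℂ) μ).mulVec v - M.mulVec v = 0 := by
    rw [← Matrix.sub_mulVec]; exact hv
  have h2 : (algebraMap ℂ (Matrix (Fin n) (Fin n) ℂ) μ).mulVec v = μ • v := by
    ext i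
    simp [Matrix.algebraMap_eq_diagonal, Matrix.mulVec_diagonal]
  rw [h2] at h1
  exact (sub_eq_zero.mp h1).symm

lemma stmt_3_aux_dot {n : ℕ} (U : Matrix (Fin n) (Fin n) ℂ) (hU : Uᴴ * U = 1)
    (x y : Fin n → ℂ) : star (U.mulVec x) ⬝ᵥ (U.mulVec y) = star x ⬝ᵥ y := by
  rw [Matrix.star_mulVec, Matrix.dotProduct_mulVec, Matrix.vecMul_vecMul, hU, Matrix.vecMul_one]

/-- If the unitary `U` has simple eigenvalues, all of whose eigenvectors have nonzero `k`-th
component, and `S` is the identity with the `(k,k)` entry replaced by `β ∈ S¹ \ {1}`,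
then `U` and `US` have no common eigenvalue. -/
theorem stmt_3 (n : ℕ) (U : Matrix (Fin n) (Fin n) ℂ)
    (hU : U ∈ Matrix.unitaryGroup (Fin n) ℂ)
    (hsimple : ∀ μ : ℂ, Polynomial.rootMultiplicity μ U.charpoly ≤ 1)
    (k : Fin n)
    (hvec : ∀ (μ : ℂ) (z : Fin n → ℂ), z ≠ 0 → U.mulVec z = μ • z → z k ≠ 0)
    (β : ℂ) (hβ : ‖β‖ = 1) (hβ1 : β ≠ 1)
    (S : Matrix (Fin n) (Fin n) ℂ)
    (hS : S = Matrix.diagonal (Function.update (fun _ : Fin n => (1 : ℂ)) k β)) :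
    spectrum ℂ U ∩ spectrum ℂ (U * S) = ∅ := by
  set d : Fin n → ℂ := Function.update (fun _ : Fin n => (1 : ℂ)) k β with hd
  subst hS
  have hU' : Uᴴ * U = 1 := by
    simpa [Matrix.star_eq_conjTranspose] using Matrix.mem_unitaryGroup_iff'.mp hU
  rw [Set.eq_empty_iff_forall_notMem]
  rintro μ ⟨h1, h2⟩
  obtain ⟨z, hz0, hz⟩ := stmt_3_aux_eig U μ h1
  obtain ⟨w, hw0, hw⟩ := stmt_3_aux_eig _ μ h2
  have hzk : z k ≠ 0 := hvec μ z hz0 hz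
  -- US w = μ w means U (S w) = μ w
  have hw' : U.mulVec ((Matrix.diagonal d).mulVec w) = μ • w := by
    rw [Matrix.mulVec_mulVec]; exact hw
  -- w k ≠ 0
  have hSw : ∀ i, (Matrix.diagonal d).mulVec w i = d i * w i := fun i =>
    Matrix.mulVec_diagonal d w i
  have hwk : w k ≠ 0 := by
    intro hwk0
    have hSww : (Matrix.diagonal d).mulVec w = w := by
      ext i
      rw [hSw i]
      by_cases hik : i = k
      · subst hik; rw [hwk0, mul_zero]
      · simp [hd, Function.update_of_ne hik]
    rw [hSww] at hw'
    exact hvec μ w hw0 hw' hwk0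
  -- |μ|² = 1
  have hzz : star z ⬝ᵥ z ≠ 0 := by
    have he : star z ⬝ᵥ z = ((∑ i, Complex.normSq (z i) : ℝ) : ℂ) := by
      push_cast
      simp [dotProduct, Complex.normSq_eq_conj_mul_self]
    rw [he, Complex.ofReal_ne_zero]
    exact ne_of_gt (Finset.sum_pos' (fun i _ => Complex.normSq_nonneg _)
      ⟨k, Finset.mem_univ k, Complex.normSq_pos.mpr hzk⟩)
  have hmu : (starRingEnd ℂ) μ * μ = 1 := by
    have := stmt_3_aux_dot U hU' z z
    rw [hz] at this
    have h3 : star (μ • z) ⬝ᵥ (μ • z) = ((starRingEnd ℂ) μ * μ) * (star z ⬝ᵥ z) := by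
      rw [star_smul, smul_dotProduct, dotProduct_smul, smul_smul]
      simp [mul_comm]
    rw [h3] at this
    have h4 : ((starRingEnd ℂ) μ * μ) * (star z ⬝ᵥ z) = 1 * (star z ⬝ᵥ z) := by
      rw [this, one_mul]
    exact mul_right_cancel₀ hzz h4
  -- key identity
  have hkey : star z ⬝ᵥ ((Matrix.diagonal d).mulVec w) = star z ⬝ᵥ w := by
    have := stmt_3_aux_dot U hU' z ((Matrix.diagonal d).mulVec w)
    rw [hz, hw'] at this
    rw [star_smul, smul_dotProduct, dotProduct_smul, smul_smul] at this
    rw [← this]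
    simp [smul_eq_mul, hmu]
  -- but the difference is (β - 1) * conj (z k) * w k ≠ 0
  have hdiff : star z ⬝ᵥ ((Matrix.diagonal d).mulVec w) - star z ⬝ᵥ w
      = (starRingEnd ℂ) (z k) * ((β - 1) * w k) := by
    rw [← dotProduct_sub, dotProduct]
    rw [Finset.sum_eq_single k]
    · simp only [Pi.sub_apply, hSw, Pi.star_apply, hd, Matrix.mulVec_diagonal, Function.update_self]
      push_cast
      rw [Complex.star_def]
      ring
    · intro i _ hik
      simp [hSw, hd, Matrix.mulVec_diagonal, Function.update_of_ne hik]
    · intro h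
      exact absurd (Finset.mem_univ k) h
  rw [hkey, sub_self] at hdiff
  have : (starRingEnd ℂ) (z k) * ((β - 1) * w k) ≠ 0 := by
    apply mul_ne_zero
    · simpa using hzk
    · exact mul_ne_zero (sub_ne_zero.mpr hβ1) hwk
  exact this hdiff.symm
end

section
/- Let U be an n-by-n unitary matrix with simple eigenvalues λ₁,…,λₙ and orthonormal eigenvectors z₁,…,zₙ, each with nonzero first component. Let S = diag(β, 1, …, 1) with β ∈ S^1 \ {1}. Then for each j, the characteristic polynomial of US evaluated at λⱼ satisfies χ_{US}(λⱼ) = χ'_U(λⱼ) · λⱼ (1-β) |aⱼ|², where aⱼ is the first component of zⱼ; in particular χ_{US}(λⱼ) ≠ 0. -/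
open Matrix Polynomial

section Aux

variable {m : Type*} [Fintype m] [DecidableEq m]

/-- Evaluating the characteristic polynomial gives a determinant. -/
lemma aux_eval_charpoly (M : Matrix m m ℂ) (x : ℂ) :
    (M.charpoly).eval x = (x • (1 : Matrix m m ℂ) - M).det := by
  rw [Matrix.charpoly, ← Polynomial.coe_evalRingHom, RingHom.map_det]
  congr 1
  ext i k
  by_cases h : i = k
  · subst h
    simp [Matrix.charmatrix_apply_eq, Matrix.one_apply]
  · simp [Matrix.charmatrix_apply_ne _ _ _ h, Matrix.one_apply, h]

/-- Similarity invariance of the characteristic polynomial. -/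
lemma aux_charpoly_conj (Z A B : Matrix m m ℂ) (h1 : Z * B = 1) (h2 : B * Z = 1) :
    (Z * A * B).charpoly = A.charpoly := by
  have hmapC : ∀ (M N : Matrix m m ℂ),
      (M * N).map (C : ℂ →+* ℂ[X]) = M.map C * N.map C := fun M N => Matrix.map_mul
  have key : charmatrix (Z * A * B) = (Z.map C) * charmatrix A * (B.map C) := by
    rw [charmatrix, charmatrix]
    rw [Matrix.mul_sub, Matrix.sub_mul]
    congr 1
    · have : (Z.map (C : ℂ →+* ℂ[X])) * Matrix.scalar m (X : ℂ[X]) =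
          Matrix.scalar m (X : ℂ[X]) * Z.map C :=
        (Matrix.scalar_commute (X : ℂ[X]) (fun r' => Commute.all _ _) _).symm
      rw [this, Matrix.mul_assoc, ← hmapC, h1]
      simp [Matrix.scalar]
    · simp only [RingHom.mapMatrix_apply]
      rw [← hmapC, ← hmapC]
  rw [Matrix.charpoly, Matrix.charpoly, key, Matrix.det_mul, Matrix.det_mul]
  have : (Z.map (C : ℂ →+* ℂ[X])).det * (B.map C).det = 1 := by
    rw [mul_comm, ← Matrix.det_mul, ← hmapC, h2]
    simp
  calc (Z.map (C : ℂ →+* ℂ[X])).det * (charmatrix A).det * (B.map C).det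
      = (charmatrix A).det * ((Z.map (C : ℂ →+* ℂ[X])).det * (B.map C).det) := by ring
    _ = (charmatrix A).det := by rw [this, mul_one]

/-- Determinant of a singular diagonal plus rank one matrix. -/
lemma aux_det (d p q : m → ℂ) (j : m) (hd : d j = 0) (hp : p j ≠ 0) :
    (Matrix.diagonal d + Matrix.vecMulVec p q).det
      = (∏ i ∈ Finset.univ.erase j, d i) * (p j * q j) := by
  set u : m → ℂ := fun i => if i = j then 0 else p i / p j with hu
  set F : Matrix m m ℂ := 1 + Matrix.vecMulVec u (Pi.single j 1) with hF
  set B' : Matrix m m ℂ := Matrix.updateRow (Matrix.diagonal d) j (p j • q) with hB'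
  have hFB : F * B' = Matrix.diagonal d + Matrix.vecMulVec p q := by
    rw [hF, add_mul, one_mul]
    ext i k
    have hrank : (Matrix.vecMulVec u (Pi.single j 1) * B') i k = u i * (p j * q k) := by
      rw [Matrix.mul_apply]
      rw [Finset.sum_eq_single j]
      · simp [Matrix.vecMulVec_apply, hB', Matrix.updateRow_self]
      · intro b _ hb
        simp [Matrix.vecMulVec_apply, Pi.single_eq_of_ne hb]
      · simp
    rw [Matrix.add_apply, hrank]
    by_cases hij : i = j
    · subst hij
      simp [hu, hB', Matrix.updateRow_self, Matrix.add_apply, Matrix.vecMulVec_apply,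
        Matrix.diagonal_apply, hd]
    · rw [hB', Matrix.updateRow_ne hij]
      simp only [Matrix.add_apply, Matrix.vecMulVec_apply, hu, if_neg hij]
      field_simp
  have hdetF : F.det = 1 := by
    rw [hF, Matrix.vecMulVec_eq Unit, Matrix.det_one_add_replicateCol_mul_replicateRow]
    simp [hu]
  have hdetB' : B'.det = (∏ i ∈ Finset.univ.erase j, d i) * (p j * q j) := by
    rw [hB', Matrix.det_updateRow_smul]
    have htr : (Matrix.updateRow (Matrix.diagonal d) j q).det
        = (Matrix.updateCol (Matrix.diagonal d) j q).det := by
      rw [← Matrix.det_transpose (Matrix.updateCol (Matrix.diagonal d) j q),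
        ← Matrix.updateRow_transpose, Matrix.diagonal_transpose]
    rw [htr, ← Matrix.cramer_apply, Matrix.cramer_eq_adjugate_mulVec,
      Matrix.adjugate_diagonal, Matrix.mulVec_diagonal]
    ring
  rw [← hFB, Matrix.det_mul, hdetF, one_mul, hdetB']

end Aux

/-- The characteristic polynomial of a diagonal matrix. -/
lemma aux_charpoly_diagonal {m : Type*} [Fintype m] [DecidableEq m] (d : m → ℂ) :
    (Matrix.diagonal d).charpoly = ∏ i, (X - C (d i)) := by
  rw [Matrix.charpoly]
  have : charmatrix (Matrix.diagonal d) = Matrix.diagonal (fun i => (X : ℂ[X]) - C (d i)) := by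
    ext i k
    by_cases h : i = k
    · subst h; simp
    · simp [Matrix.charmatrix_apply_ne _ _ _ h, Matrix.diagonal_apply_ne _ h,
        Matrix.diagonal_apply_ne d h]
  rw [this, Matrix.det_diagonal]

/-- Evaluation of the derivative of `∏ (X - C (d i))` at a root. -/
lemma aux_eval_derivative {m : Type*} [Fintype m] [DecidableEq m] (d : m → ℂ) (j : m) :
    Polynomial.eval (d j) (Polynomial.derivative (∏ i, (X - C (d i))))
      = ∏ i ∈ Finset.univ.erase j, (d j - d i) := by
  have hsplit : (∏ i, (X - C (d i)))
      = (X - C (d j)) * ∏ i ∈ Finset.univ.erase j, (X - C (d i)) :=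
    (Finset.mul_prod_erase Finset.univ _ (Finset.mem_univ j)).symm
  rw [hsplit, derivative_mul]
  simp [Polynomial.eval_prod]

/-- For a unitary `U = Z Λ Z*` with simple eigenvalues `λⱼ` and orthonormal eigenvectors
whose first components `aⱼ = Z 0 j` are nonzero, and `S = diag(β,1,…,1)` with
`β ∈ S¹ \ {1}`, one has `χ_{US}(λⱼ) = χ'_U(λⱼ) · λⱼ(1-β)|aⱼ|² ≠ 0`. -/
theorem stmt_4 (n : ℕ) (U Z : Matrix (Fin (n+1)) (Fin (n+1)) ℂ) (lam : Fin (n+1) → ℂ)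
    (hU : U ∈ Matrix.unitaryGroup (Fin (n+1)) ℂ)
    (hZ : Z ∈ Matrix.unitaryGroup (Fin (n+1)) ℂ)
    (hdec : U = Z * Matrix.diagonal lam * Zᴴ)
    (hsimple : Function.Injective lam)
    (ha : ∀ j : Fin (n+1), Z 0 j ≠ 0)
    (β : ℂ) (hβ : ‖β‖ = 1) (hβ1 : β ≠ 1)
    (S : Matrix (Fin (n+1)) (Fin (n+1)) ℂ)
    (hS : S = Matrix.diagonal (Function.update (fun _ : Fin (n+1) => (1 : ℂ)) 0 β))
    (j : Fin (n+1)) :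
    Polynomial.eval (lam j) (U * S).charpoly =
        Polynomial.eval (lam j) (Polynomial.derivative U.charpoly) *
          (lam j * (1 - β) * ((‖Z 0 j‖ ^ 2 : ℝ) : ℂ)) ∧
      Polynomial.eval (lam j) (U * S).charpoly ≠ 0 := by
  have hZ1 : Zᴴ * Z = 1 := by
    rw [← Matrix.star_eq_conjTranspose]
    exact (Matrix.mem_unitaryGroup_iff'.mp hZ)
  have hZ2 : Z * Zᴴ = 1 := by
    rw [← Matrix.star_eq_conjTranspose]
    exact (Matrix.mem_unitaryGroup_iff.mp hZ)
  -- the eigenvalues are nonzero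
  have hlam0 : ∀ i, lam i ≠ 0 := by
    have hUdet : U.det ≠ 0 := by
      have h1 : U * star U = 1 := Matrix.mem_unitaryGroup_iff.mp hU
      intro h0
      have := congrArg Matrix.det h1
      rw [Matrix.det_mul, h0, zero_mul, Matrix.det_one] at this
      exact zero_ne_one this
    rw [hdec, Matrix.det_mul, Matrix.det_mul, Matrix.det_diagonal] at hUdet
    intro i hi
    apply hUdet
    rw [Finset.prod_eq_zero (Finset.mem_univ i) hi]
    ring
  -- characteristic polynomial of U
  have hUchar : U.charpoly = ∏ i, (X - C (lam i)) := by
    rw [hdec, aux_charpoly_conj Z _ Zᴴ hZ2 hZ1, aux_charpoly_diagonal]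
  set P : ℂ := ∏ i ∈ Finset.univ.erase j, (lam j - lam i) with hP
  have hderiv : Polynomial.eval (lam j) (Polynomial.derivative U.charpoly) = P := by
    rw [hUchar, aux_eval_derivative]
  have hPne : P ≠ 0 := by
    rw [hP]
    apply Finset.prod_ne_zero_iff.mpr
    intro i hi
    have : i ≠ j := (Finset.mem_erase.mp hi).1
    exact sub_ne_zero.mpr fun h => this (hsimple h.symm)
  -- the entries of Zᴴ * S * Z
  have hZSZ : ∀ i k, (Zᴴ * S * Z) i k
      = (if i = k then (1:ℂ) else 0)
        + (β - 1) * ((starRingEnd ℂ) (Z 0 i) * Z 0 k) := by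
    intro i k
    rw [Matrix.mul_assoc, Matrix.mul_apply]
    have hterm : ∀ x : Fin (n+1), Zᴴ i x * (S * Z) x k
        = Zᴴ i x * Z x k
          + (if x = (0 : Fin (n+1)) then (β - 1) * (Zᴴ i 0 * Z 0 k) else 0) := by
      intro x
      rw [hS, Matrix.diagonal_mul]
      by_cases hx : x = 0
      · subst hx
        simp [Function.update]
        ring
      · simp [Function.update, hx]
    rw [Finset.sum_congr rfl (fun x _ => hterm x), Finset.sum_add_distrib,
      Finset.sum_ite_eq' Finset.univ (0 : Fin (n+1))]
    have : ∑ x, Zᴴ i x * Z x k = (Zᴴ * Z) i k := (Matrix.mul_apply).symm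
    rw [this, hZ1]
    simp [Matrix.one_apply, Matrix.conjTranspose_apply]
  -- the evaluation of the characteristic polynomial of U * S
  set d : Fin (n+1) → ℂ := fun i => lam j - lam i with hd
  set p : Fin (n+1) → ℂ := fun i => (1 - β) * (lam i * (starRingEnd ℂ) (Z 0 i)) with hp
  set q : Fin (n+1) → ℂ := fun k => Z 0 k with hq
  have hUSchar : (U * S).charpoly = (Matrix.diagonal lam * (Zᴴ * S * Z)).charpoly := by
    have e : Z * Matrix.diagonal lam * Zᴴ * S
        = Z * (Matrix.diagonal lam * (Zᴴ * S * Z)) * Zᴴ := by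
      simp only [Matrix.mul_assoc]
      rw [hZ2, Matrix.mul_one]
    rw [hdec, e, aux_charpoly_conj Z _ Zᴴ hZ2 hZ1]
  have hmat : lam j • (1 : Matrix (Fin (n+1)) (Fin (n+1)) ℂ)
      - Matrix.diagonal lam * (Zᴴ * S * Z)
      = Matrix.diagonal d + Matrix.vecMulVec p q := by
    ext i k
    rw [Matrix.sub_apply, Matrix.diagonal_mul, hZSZ i k, Matrix.add_apply,
      Matrix.vecMulVec_apply]
    by_cases hik : i = k
    · subst hik
      simp [hd, hp, hq, Matrix.one_apply, Matrix.diagonal_apply_eq]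
      ring
    · simp [hd, hp, hq, Matrix.one_apply, hik, Matrix.diagonal_apply_ne _ hik]
      ring
  have hdj : d j = 0 := by simp [hd]
  have hpj : p j ≠ 0 := by
    rw [hp]
    refine mul_ne_zero (sub_ne_zero.mpr fun h => hβ1 h.symm) (mul_ne_zero (hlam0 j) ?_)
    simpa using ha j
  have heval : Polynomial.eval (lam j) (U * S).charpoly = P * (p j * q j) := by
    rw [hUSchar, aux_eval_charpoly, hmat, aux_det d p q j hdj hpj]
  have habs : ((‖Z 0 j‖ ^ 2 : ℝ) : ℂ) = Z 0 j * (starRingEnd ℂ) (Z 0 j) := by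
    rw [Complex.sq_norm]
    push_cast
    rw [← Complex.mul_conj]
  constructor
  · rw [heval, hderiv, habs, hp, hq]
    ring
  · rw [heval]
    refine mul_ne_zero hPne (mul_ne_zero hpj ?_)
    simpa [hq] using ha j
end

section
/- Every eigenvector of the (n+1)-by-(n+1) CMV matrix C(α₀,…,α_{n-1}, bₙ), with αⱼ ∈ 𝔻 and bₙ ∈ S^1, has all components nonzero. -/
noncomputable section
open Matrix Polynomial

/-- `ρ(α) = (1-|α|²)^{1/2}` viewed as a complex number. -/
def rho (a : ℂ) : ℂ := (Real.sqrt (1 - ‖a‖ ^ 2) : ℝ)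

/-- The 2×2 block `Θ(α)`. -/
def Theta (a : ℂ) : Matrix (Fin 2) (Fin 2) ℂ :=
  !![(starRingEnd ℂ) a, rho a; rho a, -a]

/-- The factor `L = Θ(α₀) ⊕ Θ(α₂) ⊕ ⋯` (last diagonal entry `conj b` when `n` is even). -/
def Lmat (n : ℕ) (α : ℕ → ℂ) (b : ℂ) : Matrix (Fin (n+1)) (Fin (n+1)) ℂ :=
  Matrix.of fun i j =>
    if n % 2 = 0 ∧ i.val = n then (if j.val = n then (starRingEnd ℂ) b else 0)
    else if n % 2 = 0 ∧ j.val = n then 0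
    else if i.val % 2 = 0 then
      if j.val = i.val then (starRingEnd ℂ) (α i.val)
      else if j.val = i.val + 1 then rho (α i.val) else 0
    else
      if j.val = i.val - 1 then rho (α (i.val - 1))
      else if j.val = i.val then -(α (i.val - 1)) else 0

/-- The factor `M = 1 ⊕ Θ(α₁) ⊕ Θ(α₃) ⊕ ⋯` (last diagonal entry `conj b` when `n` is odd). -/
def Mmat (n : ℕ) (α : ℕ → ℂ) (b : ℂ) : Matrix (Fin (n+1)) (Fin (n+1)) ℂ :=
  Matrix.of fun i j =>
    if i.val = 0 then (if j.val = 0 then 1 else 0)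
    else if n % 2 = 1 ∧ i.val = n then (if j.val = n then (starRingEnd ℂ) b else 0)
    else if n % 2 = 1 ∧ j.val = n then 0
    else if i.val % 2 = 1 then
      if j.val = i.val then (starRingEnd ℂ) (α i.val)
      else if j.val = i.val + 1 then rho (α i.val) else 0
    else
      if j.val = i.val - 1 then rho (α (i.val - 1))
      else if j.val = i.val then -(α (i.val - 1)) else 0

/-- The `(n+1)×(n+1)` CMV matrix `C(α₀,…,α_{n-1},bₙ) = L·M`. -/
def CMV (n : ℕ) (α : ℕ → ℂ) (b : ℂ) : Matrix (Fin (n+1)) (Fin (n+1)) ℂ :=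
  Lmat n α b * Mmat n α b

/-! ### Auxiliary lemmas -/

lemma rho_sq {a : ℂ} (ha : ‖a‖ ≤ 1) : rho a ^ 2 = 1 - a * (starRingEnd ℂ) a := by
  have h0 : (0:ℝ) ≤ 1 - ‖a‖ ^ 2 := by nlinarith [norm_nonneg a]
  rw [rho, Complex.mul_conj, ← Complex.sq_norm, ← Complex.ofReal_pow, Real.sq_sqrt h0]
  push_cast
  ring

lemma rho_ne {a : ℂ} (ha : ‖a‖ < 1) : rho a ≠ 0 := by
  simp only [rho, ne_eq, Complex.ofReal_eq_zero]
  exact (Real.sqrt_pos.mpr (by nlinarith [norm_nonneg a])).ne'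

lemma sum_two {m : ℕ} (f : Fin m → ℂ) (a c : Fin m) (hac : a ≠ c)
    (h : ∀ j, j ≠ a → j ≠ c → f j = 0) : (∑ j, f j) = f a + f c := by
  classical
  rw [← Finset.sum_subset (Finset.subset_univ ({a, c} : Finset (Fin m)))
      (fun x _ hx => h x (fun h1 => hx (by simp [h1])) (fun h1 => hx (by simp [h1]))),
    Finset.sum_pair hac]

lemma sum_one {m : ℕ} (f : Fin m → ℂ) (a : Fin m)
    (h : ∀ j, j ≠ a → f j = 0) : (∑ j, f j) = f a :=
  Finset.sum_eq_single_of_mem a (Finset.mem_univ a) (fun x _ hx => h x hx)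

/-! ### Row extraction lemmas -/

lemma L_rowA (n : ℕ) (α : ℕ → ℂ) (b : ℂ) (y : Fin (n+1) → ℂ) (k : ℕ) (hk : 2*k+1 ≤ n) :
    (Lmat n α b).mulVec y ⟨2*k, by omega⟩
      = (starRingEnd ℂ) (α (2*k)) * y ⟨2*k, by omega⟩ + rho (α (2*k)) * y ⟨2*k+1, by omega⟩ := by
  have h0 : (Lmat n α b).mulVec y ⟨2*k, by omega⟩
      = ∑ j, Lmat n α b ⟨2*k, by omega⟩ j * y j := rfl
  rw [h0, sum_two _ ⟨2*k, by omega⟩ ⟨2*k+1, by omega⟩ (by simp only [ne_eq, Fin.mk.injEq]; omega)]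
  · congr 2 <;>
    · simp only [Lmat, Matrix.of_apply, Fin.val_mk, Nat.add_sub_cancel, and_true, true_and]
      split_ifs <;> first | rfl | contradiction | omega
  · intro j hja hjc
    have h1 : (j:ℕ) ≠ 2*k := fun h => hja (Fin.ext h)
    have h2 : (j:ℕ) ≠ 2*k+1 := fun h => hjc (Fin.ext h)
    have h3 : Lmat n α b ⟨2*k, by omega⟩ j = 0 := by
      simp only [Lmat, Matrix.of_apply, Fin.val_mk, Nat.add_sub_cancel, and_true, true_and]
      split_ifs <;> first | rfl | contradiction | omega
    rw [h3, zero_mul]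

lemma L_rowB (n : ℕ) (α : ℕ → ℂ) (b : ℂ) (y : Fin (n+1) → ℂ) (k : ℕ) (hk : 2*k+1 ≤ n) :
    (Lmat n α b).mulVec y ⟨2*k+1, by omega⟩
      = rho (α (2*k)) * y ⟨2*k, by omega⟩ + -(α (2*k)) * y ⟨2*k+1, by omega⟩ := by
  have h0 : (Lmat n α b).mulVec y ⟨2*k+1, by omega⟩
      = ∑ j, Lmat n α b ⟨2*k+1, by omega⟩ j * y j := rfl
  rw [h0, sum_two _ ⟨2*k, by omega⟩ ⟨2*k+1, by omega⟩ (by simp only [ne_eq, Fin.mk.injEq]; omega)]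
  · congr 2 <;>
    · simp only [Lmat, Matrix.of_apply, Fin.val_mk, Nat.add_sub_cancel, and_true, true_and]
      split_ifs <;> first | rfl | contradiction | omega
  · intro j hja hjc
    have h1 : (j:ℕ) ≠ 2*k := fun h => hja (Fin.ext h)
    have h2 : (j:ℕ) ≠ 2*k+1 := fun h => hjc (Fin.ext h)
    have h3 : Lmat n α b ⟨2*k+1, by omega⟩ j = 0 := by
      simp only [Lmat, Matrix.of_apply, Fin.val_mk, Nat.add_sub_cancel, and_true, true_and]
      split_ifs <;> first | rfl | contradiction | omega
    rw [h3, zero_mul]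

lemma L_rowC (n : ℕ) (α : ℕ → ℂ) (b : ℂ) (y : Fin (n+1) → ℂ) (hn : n % 2 = 0) :
    (Lmat n α b).mulVec y ⟨n, by omega⟩ = (starRingEnd ℂ) b * y ⟨n, by omega⟩ := by
  have h0 : (Lmat n α b).mulVec y ⟨n, by omega⟩
      = ∑ j, Lmat n α b ⟨n, by omega⟩ j * y j := rfl
  rw [h0, sum_one _ ⟨n, by omega⟩]
  · congr 1
    simp only [Lmat, Matrix.of_apply, Fin.val_mk, Nat.add_sub_cancel, and_true, true_and]
    split_ifs <;> first | rfl | contradiction | omega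
  · intro j hja
    have h1 : (j:ℕ) ≠ n := fun h => hja (Fin.ext h)
    have h3 : Lmat n α b ⟨n, by omega⟩ j = 0 := by
      simp only [Lmat, Matrix.of_apply, Fin.val_mk, Nat.add_sub_cancel, and_true, true_and]
      split_ifs <;> first | rfl | contradiction | omega
    rw [h3, zero_mul]

lemma M_row0 (n : ℕ) (α : ℕ → ℂ) (b : ℂ) (z : Fin (n+1) → ℂ) :
    (Mmat n α b).mulVec z ⟨0, by omega⟩ = z ⟨0, by omega⟩ := by
  have h0 : (Mmat n α b).mulVec z ⟨0, by omega⟩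
      = ∑ j, Mmat n α b ⟨0, by omega⟩ j * z j := rfl
  rw [h0, sum_one _ ⟨0, by omega⟩]
  · have h3 : Mmat n α b ⟨0, by omega⟩ ⟨0, by omega⟩ = 1 := by
      simp only [Mmat, Matrix.of_apply, Fin.val_mk, Nat.add_sub_cancel, and_true, true_and]
      split_ifs <;> first | rfl | contradiction | omega
    rw [h3, one_mul]
  · intro j hja
    have h1 : (j:ℕ) ≠ 0 := fun h => hja (Fin.ext h)
    have h3 : Mmat n α b ⟨0, by omega⟩ j = 0 := by
      simp only [Mmat, Matrix.of_apply, Fin.val_mk, Nat.add_sub_cancel, and_true, true_and]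
      split_ifs <;> first | rfl | contradiction | omega
    rw [h3, zero_mul]

lemma M_rowB (n : ℕ) (α : ℕ → ℂ) (b : ℂ) (z : Fin (n+1) → ℂ) (k : ℕ) (hk : 2*k+2 ≤ n) :
    (Mmat n α b).mulVec z ⟨2*k+1, by omega⟩
      = (starRingEnd ℂ) (α (2*k+1)) * z ⟨2*k+1, by omega⟩
        + rho (α (2*k+1)) * z ⟨2*k+2, by omega⟩ := by
  have h0 : (Mmat n α b).mulVec z ⟨2*k+1, by omega⟩
      = ∑ j, Mmat n α b ⟨2*k+1, by omega⟩ j * z j := rfl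
  rw [h0, sum_two _ ⟨2*k+1, by omega⟩ ⟨2*k+2, by omega⟩ (by simp only [ne_eq, Fin.mk.injEq]; omega)]
  · congr 2 <;>
    · simp only [Mmat, Matrix.of_apply, Fin.val_mk, Nat.add_sub_cancel, and_true, true_and]
      split_ifs <;> first | rfl | contradiction | omega
  · intro j hja hjc
    have h1 : (j:ℕ) ≠ 2*k+1 := fun h => hja (Fin.ext h)
    have h2 : (j:ℕ) ≠ 2*k+2 := fun h => hjc (Fin.ext h)
    have h3 : Mmat n α b ⟨2*k+1, by omega⟩ j = 0 := by
      simp only [Mmat, Matrix.of_apply, Fin.val_mk, Nat.add_sub_cancel, and_true, true_and]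
      split_ifs <;> first | rfl | contradiction | omega
    rw [h3, zero_mul]

lemma M_rowC (n : ℕ) (α : ℕ → ℂ) (b : ℂ) (z : Fin (n+1) → ℂ) (k : ℕ) (hk : 2*k+2 ≤ n) :
    (Mmat n α b).mulVec z ⟨2*k+2, by omega⟩
      = rho (α (2*k+1)) * z ⟨2*k+1, by omega⟩ + -(α (2*k+1)) * z ⟨2*k+2, by omega⟩ := by
  have h0 : (Mmat n α b).mulVec z ⟨2*k+2, by omega⟩
      = ∑ j, Mmat n α b ⟨2*k+2, by omega⟩ j * z j := rfl
  rw [h0, sum_two _ ⟨2*k+1, by omega⟩ ⟨2*k+2, by omega⟩ (by simp only [ne_eq, Fin.mk.injEq]; omega)]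
  · congr 2 <;>
    · simp only [Mmat, Matrix.of_apply, Fin.val_mk, Nat.add_sub_cancel, and_true, true_and]
      split_ifs <;> first | rfl | contradiction | omega
  · intro j hja hjc
    have h1 : (j:ℕ) ≠ 2*k+1 := fun h => hja (Fin.ext h)
    have h2 : (j:ℕ) ≠ 2*k+2 := fun h => hjc (Fin.ext h)
    have h3 : Mmat n α b ⟨2*k+2, by omega⟩ j = 0 := by
      simp only [Mmat, Matrix.of_apply, Fin.val_mk, Nat.add_sub_cancel, and_true, true_and]
      split_ifs <;> first | rfl | contradiction | omega
    rw [h3, zero_mul]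

lemma M_rowD (n : ℕ) (α : ℕ → ℂ) (b : ℂ) (z : Fin (n+1) → ℂ) (hn : n % 2 = 1) :
    (Mmat n α b).mulVec z ⟨n, by omega⟩ = (starRingEnd ℂ) b * z ⟨n, by omega⟩ := by
  have h0 : (Mmat n α b).mulVec z ⟨n, by omega⟩
      = ∑ j, Mmat n α b ⟨n, by omega⟩ j * z j := rfl
  rw [h0, sum_one _ ⟨n, by omega⟩]
  · congr 1
    simp only [Mmat, Matrix.of_apply, Fin.val_mk, Nat.add_sub_cancel, and_true, true_and]
    split_ifs <;> first | rfl | contradiction | omega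
  · intro j hja
    have h1 : (j:ℕ) ≠ n := fun h => hja (Fin.ext h)
    have h3 : Mmat n α b ⟨n, by omega⟩ j = 0 := by
      simp only [Mmat, Matrix.of_apply, Fin.val_mk, Nat.add_sub_cancel, and_true, true_and]
      split_ifs <;> first | rfl | contradiction | omega
    rw [h3, zero_mul]

/-! ### The Szegő recursion sequences -/

/-- `(φ_k(μ), φ*_k(μ))` (unnormalized monic Szegő recursion values). -/
def UVseq (μ : ℂ) (α : ℕ → ℂ) : ℕ → ℂ × ℂ :=
  fun k => Nat.rec ((1:ℂ), (1:ℂ))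
    (fun k p => (μ * p.1 - (starRingEnd ℂ) (α k) * p.2, p.2 - α k * μ * p.1)) k

lemma UV_key (μ : ℂ) (α : ℕ → ℂ) (k : ℕ) :
    Complex.normSq (UVseq μ α (k+1)).2 - Complex.normSq (UVseq μ α (k+1)).1
      = (1 - Complex.normSq (α k)) *
        (Complex.normSq (UVseq μ α k).2 - Complex.normSq μ * Complex.normSq (UVseq μ α k).1) := by
  have e : ∀ w : ℂ, ((Complex.normSq w : ℝ) : ℂ) = w * (starRingEnd ℂ) w :=
    fun w => (Complex.mul_conj w).symm
  have h1 : (UVseq μ α (k+1)).1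
      = μ * (UVseq μ α k).1 - (starRingEnd ℂ) (α k) * (UVseq μ α k).2 := rfl
  have h2 : (UVseq μ α (k+1)).2
      = (UVseq μ α k).2 - α k * μ * (UVseq μ α k).1 := rfl
  have main : ((Complex.normSq (UVseq μ α (k+1)).2 : ℝ) : ℂ)
        - ((Complex.normSq (UVseq μ α (k+1)).1 : ℝ) : ℂ)
      = (1 - ((Complex.normSq (α k) : ℝ) : ℂ)) *
        (((Complex.normSq (UVseq μ α k).2 : ℝ) : ℂ)
          - ((Complex.normSq μ : ℝ) : ℂ) * ((Complex.normSq (UVseq μ α k).1 : ℝ) : ℂ)) := by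
    simp only [e, h1, h2, _root_.map_sub, _root_.map_mul, Complex.conj_conj]
    ring
  exact_mod_cast main

lemma UV_circle_eq (μ : ℂ) (α : ℕ → ℂ) (hμ : Complex.normSq μ = 1) (k : ℕ) :
    Complex.normSq (UVseq μ α k).1 = Complex.normSq (UVseq μ α k).2 := by
  induction k with
  | zero => rfl
  | succ k ih =>
    have h := UV_key μ α k
    rw [hμ, one_mul, ← ih, sub_self, mul_zero] at h
    linarith

lemma UV_in (μ : ℂ) (α : ℕ → ℂ) (n : ℕ) (hμ : Complex.normSq μ < 1)
    (hα : ∀ j < n, ‖α j‖ < 1) :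
    ∀ k ≤ n, 0 < Complex.normSq (UVseq μ α k).2
        - Complex.normSq μ * Complex.normSq (UVseq μ α k).1 := by
  intro k
  induction k with
  | zero =>
    intro _
    have hU : (UVseq μ α 0).1 = 1 := rfl
    have hV : (UVseq μ α 0).2 = 1 := rfl
    rw [hU, hV, Complex.normSq_one]
    linarith
  | succ k ih =>
    intro hk
    have hQ := ih (by omega)
    have hkey := UV_key μ α k
    have hak : Complex.normSq (α k) < 1 := by
      have h := hα k (by omega)
      have := Complex.sq_norm (α k)
      nlinarith [norm_nonneg (α k)]
    nlinarith [Complex.normSq_nonneg (UVseq μ α (k+1)).1,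
      mul_pos (show (0:ℝ) < 1 - Complex.normSq (α k) by linarith) hQ]

lemma UV_out (μ : ℂ) (α : ℕ → ℂ) (n : ℕ) (hμ : 1 < Complex.normSq μ)
    (hα : ∀ j < n, ‖α j‖ < 1) :
    ∀ k ≤ n, 0 < Complex.normSq μ * Complex.normSq (UVseq μ α k).1
        - Complex.normSq (UVseq μ α k).2 := by
  intro k
  induction k with
  | zero =>
    intro _
    have hU : (UVseq μ α 0).1 = 1 := rfl
    have hV : (UVseq μ α 0).2 = 1 := rfl
    rw [hU, hV, Complex.normSq_one]
    linarith
  | succ k ih =>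
    intro hk
    have hR := ih (by omega)
    have hkey := UV_key μ α k
    have hak : Complex.normSq (α k) < 1 := by
      have h := hα k (by omega)
      have := Complex.sq_norm (α k)
      nlinarith [norm_nonneg (α k)]
    nlinarith [Complex.normSq_nonneg (UVseq μ α (k+1)).1,
      mul_pos (show (0:ℝ) < 1 - Complex.normSq (α k) by linarith) hR]

lemma UV_circle_ne (μ : ℂ) (α : ℕ → ℂ) (n : ℕ) (hμ : Complex.normSq μ = 1)
    (hα : ∀ j < n, ‖α j‖ < 1) :
    ∀ k ≤ n, (UVseq μ α k).1 ≠ 0 ∧ (UVseq μ α k).2 ≠ 0 := by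
  have habs : ‖μ‖ = 1 := by rw [Complex.norm_def, hμ, Real.sqrt_one]
  have hpos : ∀ k ≤ n, 0 < ‖(UVseq μ α k).1‖ := by
    intro k
    induction k with
    | zero =>
      intro _
      have hU : (UVseq μ α 0).1 = 1 := rfl
      rw [hU, norm_one]
      norm_num
    | succ k ih =>
      intro hk
      have h1 := ih (by omega)
      have habsV : ‖(UVseq μ α k).2‖ = ‖(UVseq μ α k).1‖ := by
        rw [Complex.norm_def, Complex.norm_def, UV_circle_eq μ α hμ k]
      have hak := hα k (by omega)
      have hU1 : (UVseq μ α (k+1)).1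
          = μ * (UVseq μ α k).1 - (starRingEnd ℂ) (α k) * (UVseq μ α k).2 := rfl
      have hge := norm_sub_norm_le (μ * (UVseq μ α k).1)
        ((starRingEnd ℂ) (α k) * (UVseq μ α k).2)
      rw [← hU1, norm_mul, norm_mul, Complex.norm_conj, habs, habsV, one_mul] at hge
      nlinarith
  intro k hk
  refine ⟨(norm_pos_iff.mp (hpos k hk)), ?_⟩
  intro h0
  have h := UV_circle_eq μ α hμ k
  rw [h0, Complex.normSq_zero] at h
  exact (norm_pos_iff.mp (hpos k hk)) (Complex.normSq_eq_zero.mp h)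

/-- Every eigenvector of the CMV matrix `C(α₀,…,α_{n-1},bₙ)` has all components nonzero. -/
theorem stmt_7 (n : ℕ) (α : ℕ → ℂ) (hα : ∀ j < n, ‖α j‖ < 1)
    (b : ℂ) (hb : ‖b‖ = 1)
    (μ : ℂ) (z : Fin (n+1) → ℂ) (hz : z ≠ 0)
    (heig : (CMV n α b).mulVec z = μ • z) :
    ∀ i : Fin (n+1), z i ≠ 0 := by
  classical
  have hbne : (starRingEnd ℂ) b ≠ 0 := by
    intro h
    have : b = 0 := by simpa using congrArg (starRingEnd ℂ) h
    rw [this] at hb; simp at hb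
  set y : Fin (n+1) → ℂ := (Mmat n α b).mulVec z with hydef
  have hLy : ∀ i, (Lmat n α b).mulVec y i = μ * z i := by
    intro i
    rw [hydef, Matrix.mulVec_mulVec]
    show (CMV n α b).mulVec z i = μ * z i
    rw [heig]; rfl
  -- scalar row equations
  have hLA : ∀ k, ∀ hk : 2*k+1 ≤ n, μ * z ⟨2*k, by omega⟩
      = (starRingEnd ℂ) (α (2*k)) * y ⟨2*k, by omega⟩ + rho (α (2*k)) * y ⟨2*k+1, by omega⟩ :=
    fun k hk => by rw [← hLy ⟨2*k, by omega⟩, L_rowA n α b y k hk]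
  have hLB : ∀ k, ∀ hk : 2*k+1 ≤ n, μ * z ⟨2*k+1, by omega⟩
      = rho (α (2*k)) * y ⟨2*k, by omega⟩ + -(α (2*k)) * y ⟨2*k+1, by omega⟩ :=
    fun k hk => by rw [← hLy ⟨2*k+1, by omega⟩, L_rowB n α b y k hk]
  have hLC : n % 2 = 0 → μ * z ⟨n, by omega⟩ = (starRingEnd ℂ) b * y ⟨n, by omega⟩ :=
    fun hn => by rw [← hLy ⟨n, by omega⟩, L_rowC n α b y hn]
  have hM0 : y ⟨0, by omega⟩ = z ⟨0, by omega⟩ := M_row0 n α b z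
  have hMB : ∀ k, ∀ hk : 2*k+2 ≤ n, y ⟨2*k+1, by omega⟩
      = (starRingEnd ℂ) (α (2*k+1)) * z ⟨2*k+1, by omega⟩
        + rho (α (2*k+1)) * z ⟨2*k+2, by omega⟩ :=
    fun k hk => M_rowB n α b z k hk
  have hMC : ∀ k, ∀ hk : 2*k+2 ≤ n, y ⟨2*k+2, by omega⟩
      = rho (α (2*k+1)) * z ⟨2*k+1, by omega⟩ + -(α (2*k+1)) * z ⟨2*k+2, by omega⟩ :=
    fun k hk => M_rowC n α b z k hk
  have hMD : n % 2 = 1 → y ⟨n, by omega⟩ = (starRingEnd ℂ) b * z ⟨n, by omega⟩ :=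
    fun hn => M_rowD n α b z hn
  have hrho : ∀ j, j < n → rho (α j) ^ 2 = 1 - α j * (starRingEnd ℂ) (α j) :=
    fun j hj => rho_sq (le_of_lt (hα j hj))
  have hrhone : ∀ j, j < n → rho (α j) ≠ 0 := fun j hj => rho_ne (hα j hj)
  -- case μ = 0 : contradiction
  rcases eq_or_ne μ 0 with hμ0 | hμ0
  · exfalso
    subst hμ0
    have hyzero : ∀ i : Fin (n+1), y i = 0 := by
      intro i
      by_cases hbd : n % 2 = 0 ∧ i.val = n
      · have h := hLC hbd.1
        rw [zero_mul] at h
        have h2 : y ⟨n, by omega⟩ = 0 := by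
          rcases mul_eq_zero.mp h.symm with h3 | h3
          · exact absurd h3 hbne
          · exact h3
        have : i = ⟨n, by omega⟩ := Fin.ext hbd.2
        rw [this]; exact h2
      · set k := i.val / 2 with hkdef
        have hcase : i.val = 2*k ∨ i.val = 2*k+1 := by omega
        have hk1 : 2*k+1 ≤ n := by
          rcases hcase with h | h
          · rcases Nat.lt_or_ge (2*k) n with h2 | h2
            · omega
            · exfalso
              have : i.val = n := by omega
              have hne : n % 2 = 0 := by omega
              exact hbd ⟨hne, this⟩
          · omega
        have h1 := hLA k hk1
        have h2 := hLB k hk1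
        rw [zero_mul] at h1 h2
        have hy1 : y ⟨2*k, by omega⟩ = 0 := by
          linear_combination
            (-(α (2*k))) * h1 - rho (α (2*k)) * h2 - y ⟨2*k, by omega⟩ * hrho (2*k) (by omega)
        have hy2 : y ⟨2*k+1, by omega⟩ = 0 := by
          linear_combination
            (-(rho (α (2*k)))) * h1 + (starRingEnd ℂ) (α (2*k)) * h2
              - y ⟨2*k+1, by omega⟩ * hrho (2*k) (by omega)
        rcases hcase with h | h
        · have : i = ⟨2*k, by omega⟩ := Fin.ext h
          rw [this]; exact hy1
        · have : i = ⟨2*k+1, by omega⟩ := Fin.ext h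
          rw [this]; exact hy2
    have hzzero : ∀ i : Fin (n+1), z i = 0 := by
      intro i
      by_cases h0 : i.val = 0
      · have : i = ⟨0, by omega⟩ := Fin.ext h0
        rw [this, ← hM0]
        exact hyzero _
      by_cases hbd : n % 2 = 1 ∧ i.val = n
      · have h := hMD hbd.1
        rw [hyzero _] at h
        have h2 : z ⟨n, by omega⟩ = 0 := by
          rcases mul_eq_zero.mp h.symm with h3 | h3
          · exact absurd h3 hbne
          · exact h3
        have : i = ⟨n, by omega⟩ := Fin.ext hbd.2
        rw [this]; exact h2
      · have hcase : ∃ k, (i.val = 2*k+1 ∨ i.val = 2*k+2) ∧ 2*k+2 ≤ n := by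
          rcases Nat.even_or_odd i.val with ⟨r, hr⟩ | ⟨r, hr⟩
          · exact ⟨r - 1, by omega, by omega⟩
          · have h2 : 2*r+2 ≤ n := by
              rcases Nat.lt_or_ge (2*r+1) n with h2 | h2
              · omega
              · exfalso; exact hbd ⟨by omega, by omega⟩
            exact ⟨r, by omega, h2⟩
        obtain ⟨k, hck, hk2⟩ := hcase
        have h1 := hMB k hk2
        have h2 := hMC k hk2
        rw [hyzero _] at h1 h2
        have hz1 : z ⟨2*k+1, by omega⟩ = 0 := by
          linear_combination
            (-(α (2*k+1))) * h1 - rho (α (2*k+1)) * h2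
              - z ⟨2*k+1, by omega⟩ * hrho (2*k+1) (by omega)
        have hz2 : z ⟨2*k+2, by omega⟩ = 0 := by
          linear_combination
            (-(rho (α (2*k+1)))) * h1 + (starRingEnd ℂ) (α (2*k+1)) * h2
              - z ⟨2*k+2, by omega⟩ * hrho (2*k+1) (by omega)
        rcases hck with h | h
        · have : i = ⟨2*k+1, by omega⟩ := Fin.ext h
          rw [this]; exact hz1
        · have : i = ⟨2*k+2, by omega⟩ := Fin.ext h
          rw [this]; exact hz2
    exact hz (funext hzzero)
  -- now μ ≠ 0
  set U : ℕ → ℂ := fun k => (UVseq μ α k).1 with hUdef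
  set V : ℕ → ℂ := fun k => (UVseq μ α k).2 with hVdef
  have hU0 : U 0 = 1 := rfl
  have hV0 : V 0 = 1 := rfl
  have hUS : ∀ j, U (j+1) = μ * U j - (starRingEnd ℂ) (α j) * V j := fun j => rfl
  have hVS : ∀ j, V (j+1) = V j - α j * μ * U j := fun j => rfl
  set Pr : ℕ → ℂ := fun j => ∏ i ∈ Finset.range j, rho (α i) with hPrdef
  have hPr0 : Pr 0 = 1 := Finset.prod_range_zero _
  have hPrS : ∀ j, Pr (j+1) = Pr j * rho (α j) := fun j => Finset.prod_range_succ _ j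
  have hPrne : ∀ j, j ≤ n → Pr j ≠ 0 := by
    intro j hj
    rw [hPrdef]
    exact Finset.prod_ne_zero_iff.mpr (fun i hi => hrhone i (by
      have := Finset.mem_range.mp hi; omega))
  -- the two structural steps
  have stepAB : ∀ k, ∀ hk : 2*k+1 ≤ n,
      (μ^k * Pr (2*k) * z ⟨2*k, by omega⟩ = U (2*k) * z ⟨0, by omega⟩) →
      (μ^k * Pr (2*k) * y ⟨2*k, by omega⟩ = V (2*k) * z ⟨0, by omega⟩) →
      (μ^(k+1) * Pr (2*k+1) * z ⟨2*k+1, by omega⟩ = V (2*k+1) * z ⟨0, by omega⟩)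
        ∧ (μ^k * Pr (2*k+1) * y ⟨2*k+1, by omega⟩ = U (2*k+1) * z ⟨0, by omega⟩) := by
    intro k hk hZe hYe
    have hA := hLA k hk
    have hB := hLB k hk
    have hr := hrho (2*k) (by omega)
    have hYo : μ^k * Pr (2*k+1) * y ⟨2*k+1, by omega⟩ = U (2*k+1) * z ⟨0, by omega⟩ := by
      rw [hPrS (2*k), hUS (2*k)]
      linear_combination (-(μ^k * Pr (2*k))) * hA + μ * hZe - (starRingEnd ℂ) (α (2*k)) * hYe
    refine ⟨?_, hYo⟩
    rw [hPrS (2*k)] at hYo ⊢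
    rw [hVS (2*k)]
    rw [hUS (2*k)] at hYo
    linear_combination (μ^k * Pr (2*k) * rho (α (2*k))) * hB
      + (μ^k * Pr (2*k) * y ⟨2*k, by omega⟩) * hr
      + (1 - α (2*k) * (starRingEnd ℂ) (α (2*k))) * hYe - (α (2*k)) * hYo
  have stepCD : ∀ k, ∀ hk : 2*k+2 ≤ n,
      (μ^(k+1) * Pr (2*k+1) * z ⟨2*k+1, by omega⟩ = V (2*k+1) * z ⟨0, by omega⟩) →
      (μ^k * Pr (2*k+1) * y ⟨2*k+1, by omega⟩ = U (2*k+1) * z ⟨0, by omega⟩) →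
      (μ^(k+1) * Pr (2*(k+1)) * z ⟨2*(k+1), by omega⟩ = U (2*(k+1)) * z ⟨0, by omega⟩)
        ∧ (μ^(k+1) * Pr (2*(k+1)) * y ⟨2*(k+1), by omega⟩ = V (2*(k+1)) * z ⟨0, by omega⟩) := by
    intro k hk hZo hYo
    have hmb := hMB k hk
    have hmc := hMC k hk
    have hr := hrho (2*k+1) (by omega)
    simp only [show 2*(k+1) = (2*k+1)+1 from by ring]
    rw [hPrS (2*k+1), hUS (2*k+1), hVS (2*k+1)]
    have hZe2 : μ^(k+1) * (Pr (2*k+1) * rho (α (2*k+1))) * z ⟨2*k+1+1, by omega⟩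
        = (μ * U (2*k+1) - (starRingEnd ℂ) (α (2*k+1)) * V (2*k+1)) * z ⟨0, by omega⟩ := by
      have hmb' : y ⟨2*k+1, by omega⟩
          = (starRingEnd ℂ) (α (2*k+1)) * z ⟨2*k+1, by omega⟩
            + rho (α (2*k+1)) * z ⟨2*k+1+1, by omega⟩ := hmb
      linear_combination (-(μ^(k+1) * Pr (2*k+1))) * hmb' + μ * hYo
        - (starRingEnd ℂ) (α (2*k+1)) * hZo
    refine ⟨hZe2, ?_⟩
    have hmc' : y ⟨2*k+1+1, by omega⟩
        = rho (α (2*k+1)) * z ⟨2*k+1, by omega⟩ + -(α (2*k+1)) * z ⟨2*k+1+1, by omega⟩ := hmc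
    linear_combination (μ^(k+1) * Pr (2*k+1) * rho (α (2*k+1))) * hmc'
      - (α (2*k+1)) * hZe2 + (1 - α (2*k+1) * (starRingEnd ℂ) (α (2*k+1))) * hZo
      + (μ^(k+1) * Pr (2*k+1) * z ⟨2*k+1, by omega⟩) * hr
  -- the main formulas by induction
  have main : ∀ k : ℕ,
      (∀ hk : 2*k ≤ n, (μ^k * Pr (2*k) * z ⟨2*k, by omega⟩ = U (2*k) * z ⟨0, by omega⟩)
        ∧ (μ^k * Pr (2*k) * y ⟨2*k, by omega⟩ = V (2*k) * z ⟨0, by omega⟩))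
      ∧ (∀ hk : 2*k+1 ≤ n, (μ^(k+1) * Pr (2*k+1) * z ⟨2*k+1, by omega⟩ = V (2*k+1) * z ⟨0, by omega⟩)
        ∧ (μ^k * Pr (2*k+1) * y ⟨2*k+1, by omega⟩ = U (2*k+1) * z ⟨0, by omega⟩)) := by
    intro k
    induction k with
    | zero =>
      have hZe0 : μ^0 * Pr (2*0) * z ⟨2*0, by omega⟩ = U (2*0) * z ⟨0, by omega⟩ := by
        simp only [show 2*0 = 0 from rfl, pow_zero, hPr0, hU0, one_mul]
      have hYe0 : μ^0 * Pr (2*0) * y ⟨2*0, by omega⟩ = V (2*0) * z ⟨0, by omega⟩ := by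
        simp only [show 2*0 = 0 from rfl, pow_zero, hPr0, hV0, one_mul]
        exact hM0
      exact ⟨fun _ => ⟨hZe0, hYe0⟩, fun h => stepAB 0 h hZe0 hYe0⟩
    | succ k ih =>
      by_cases h2 : 2*(k+1) ≤ n
      · obtain ⟨hZo, hYo⟩ := ih.2 (by omega)
        obtain ⟨hZe2, hYe2⟩ := stepCD k (by omega) hZo hYo
        exact ⟨fun _ => ⟨hZe2, hYe2⟩, fun h => stepAB (k+1) h hZe2 hYe2⟩
      · exact ⟨fun h => absurd h h2, fun h => absurd (by omega : 2*(k+1) ≤ n) h2⟩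
  -- z 0 is nonzero
  have hz0 : z ⟨0, by omega⟩ ≠ 0 := by
    intro h0
    apply hz
    funext i
    show z i = 0
    rcases Nat.even_or_odd i.val with ⟨r, hr⟩ | ⟨r, hr⟩
    · have hform := ((main r).1 (by omega)).1
      rw [h0, mul_zero] at hform
      have : i = ⟨2*r, by omega⟩ := Fin.ext (show (i:ℕ) = 2*r by omega)
      rw [this]
      rcases mul_eq_zero.mp hform with h | h
      · exact absurd h (mul_ne_zero (pow_ne_zero r hμ0) (hPrne (2*r) (by omega)))
      · exact h
    · have hform := ((main r).2 (by omega)).1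
      rw [h0, mul_zero] at hform
      have : i = ⟨2*r+1, by omega⟩ := Fin.ext (show (i:ℕ) = 2*r+1 by omega)
      rw [this]
      rcases mul_eq_zero.mp hform with h | h
      · exact absurd h (mul_ne_zero (pow_ne_zero (r+1) hμ0) (hPrne (2*r+1) (by omega)))
      · exact h
  -- boundary relation : μ * U n = conj b * V n
  have hrel : μ * U n = (starRingEnd ℂ) b * V n := by
    rcases Nat.even_or_odd n with ⟨k, hkn⟩ | ⟨k, hkn⟩
    · have hn2 : n = 2*k := by omega
      have hC := hLC (by omega)
      rw [show (⟨n, by omega⟩ : Fin (n+1)) = ⟨2*k, by omega⟩ from Fin.ext (show n = 2*k by omega)] at hC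
      obtain ⟨hZe, hYe⟩ := (main k).1 (by omega)
      have hglobal : (μ * U (2*k)) * z ⟨0, by omega⟩
          = ((starRingEnd ℂ) b * V (2*k)) * z ⟨0, by omega⟩ := by
        linear_combination (μ^k * Pr (2*k)) * hC - μ * hZe + (starRingEnd ℂ) b * hYe
      rw [hn2]
      exact mul_right_cancel₀ hz0 hglobal
    · have hn2 : n = 2*k+1 := by omega
      have hD := hMD (by omega)
      rw [show (⟨n, by omega⟩ : Fin (n+1)) = ⟨2*k+1, by omega⟩ from Fin.ext (show n = 2*k+1 by omega)] at hD
      obtain ⟨hZo, hYo⟩ := (main k).2 (by omega)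
      have hglobal : (μ * U (2*k+1)) * z ⟨0, by omega⟩
          = ((starRingEnd ℂ) b * V (2*k+1)) * z ⟨0, by omega⟩ := by
        linear_combination (μ^(k+1) * Pr (2*k+1)) * hD - μ * hYo + (starRingEnd ℂ) b * hZo
      rw [hn2]
      exact mul_right_cancel₀ hz0 hglobal
  have hnb : Complex.normSq b = 1 := by
    rw [← Complex.sq_norm, hb]; norm_num
  have hrelsq : Complex.normSq μ * Complex.normSq (U n) = Complex.normSq (V n) := by
    have := congrArg Complex.normSq hrel
    rwa [Complex.normSq_mul, Complex.normSq_mul, Complex.normSq_conj, hnb, one_mul] at this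
  -- |μ| = 1
  have hμ1 : Complex.normSq μ = 1 := by
    have hrelsq' : Complex.normSq μ * Complex.normSq (UVseq μ α n).1
        = Complex.normSq (UVseq μ α n).2 := hrelsq
    rcases lt_trichotomy (Complex.normSq μ) 1 with h | h | h
    · exfalso
      have h2 := UV_in μ α n h hα n (le_refl n)
      linarith
    · exact h
    · exfalso
      have h2 := UV_out μ α n h hα n (le_refl n)
      linarith
  -- conclusion
  have hUV := UV_circle_ne μ α n hμ1 hα
  intro i
  rcases Nat.even_or_odd i.val with ⟨r, hr⟩ | ⟨r, hr⟩
  · have hform := ((main r).1 (by omega)).1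
    have hie : i = ⟨2*r, by omega⟩ := Fin.ext (show (i:ℕ) = 2*r by omega)
    rw [hie]
    intro h0
    rw [h0, mul_zero] at hform
    exact mul_ne_zero (hUV (2*r) (by omega)).1 hz0 hform.symm
  · have hform := ((main r).2 (by omega)).1
    have hie : i = ⟨2*r+1, by omega⟩ := Fin.ext (show (i:ℕ) = 2*r+1 by omega)
    rw [hie]
    intro h0
    rw [h0, mul_zero] at hform
    exact mul_ne_zero (hUV (2*r+1) (by omega)).2 hz0 hform.symm
end
end

section
/- Let C = C(α₀,…,α_{n-1}, bₙ) be the (n+1)-by-(n+1) CMV matrix with αⱼ ∈ 𝔻, bₙ ∈ S^1, partitioned in blocks C = [[C₁₁, C₁₂],[C₂₁, C₂₂]] with C₁₁ of size (m+1)×(m+1) for 0 ≤ m < n. Then the trailing principal submatrix C₂₂ has no eigenvalues on the unit circle. -/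
noncomputable section
open Matrix Polynomial

-- rho facts
lemma star_rho (a : ℂ) : star (rho a) = rho a := by
  simp [rho, Complex.star_def, Complex.conj_ofReal]

lemma rho_mul_self (a : ℂ) (h : ‖a‖ < 1) :
    rho a * rho a = ((1 - ‖a‖ ^ 2 : ℝ) : ℂ) := by
  rw [rho, ← Complex.ofReal_mul,
    Real.mul_self_sqrt (by nlinarith [norm_nonneg a])]

lemma rho_ne_zero (a : ℂ) (h : ‖a‖ < 1) : rho a ≠ 0 := by
  have : 0 < Real.sqrt (1 - ‖a‖ ^ 2) :=
    Real.sqrt_pos.mpr (by nlinarith [norm_nonneg a])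
  simpa [rho] using Complex.ofReal_ne_zero.mpr this.ne'

lemma conj_mul_self (a : ℂ) : (starRingEnd ℂ) a * a = ((‖a‖ ^ 2 : ℝ) : ℂ) := by
  rw [mul_comm, Complex.mul_conj, Complex.normSq_eq_norm_sq]

section Entries
variable {n : ℕ} {α : ℕ → ℂ} {b : ℂ}

lemma Lmat_eq_zero {i j : Fin (n+1)} (h : i.val / 2 ≠ j.val / 2) :
    Lmat n α b i j = 0 := by
  have hi := i.isLt; have hj := j.isLt
  unfold Lmat; rw [Matrix.of_apply]
  split_ifs <;> first | rfl | (exfalso; omega)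

lemma Lmat_diag_even {i j : Fin (n+1)} (hp : i.val % 2 = 0) (hn : i.val < n)
    (hj : j.val = i.val) : Lmat n α b i j = (starRingEnd ℂ) (α i.val) := by
  have hi := i.isLt; have hj' := j.isLt
  unfold Lmat; rw [Matrix.of_apply]
  split_ifs <;> first | rfl | (exfalso; omega)

lemma Lmat_superdiag {i j : Fin (n+1)} (hp : i.val % 2 = 0) (hn : i.val < n)
    (hj : j.val = i.val + 1) : Lmat n α b i j = rho (α i.val) := by
  have hi := i.isLt; have hj' := j.isLt
  unfold Lmat; rw [Matrix.of_apply]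
  split_ifs <;> first | rfl | (exfalso; omega)

lemma Lmat_subdiag {i j : Fin (n+1)} (hp : i.val % 2 = 1)
    (hj : j.val = i.val - 1) : Lmat n α b i j = rho (α (i.val - 1)) := by
  have hi := i.isLt; have hj' := j.isLt
  unfold Lmat; rw [Matrix.of_apply]
  split_ifs <;> first | rfl | (exfalso; omega)

lemma Lmat_diag_odd {i j : Fin (n+1)} (hp : i.val % 2 = 1)
    (hj : j.val = i.val) : Lmat n α b i j = -(α (i.val - 1)) := by
  have hi := i.isLt; have hj' := j.isLt
  unfold Lmat; rw [Matrix.of_apply]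
  split_ifs <;> first | rfl | (exfalso; omega)

lemma Lmat_corner {i j : Fin (n+1)} (hn2 : n % 2 = 0) (hi : i.val = n)
    (hj : j.val = n) : Lmat n α b i j = (starRingEnd ℂ) b := by
  unfold Lmat; rw [Matrix.of_apply]
  split_ifs <;> first | rfl | (exfalso; omega)

lemma Mmat_eq_zero {i j : Fin (n+1)} (h : (i.val + 1) / 2 ≠ (j.val + 1) / 2) :
    Mmat n α b i j = 0 := by
  have hi := i.isLt; have hj := j.isLt
  unfold Mmat; rw [Matrix.of_apply]
  split_ifs <;> first | rfl | (exfalso; omega)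

lemma Mmat_00 {i j : Fin (n+1)} (hi : i.val = 0) (hj : j.val = 0) :
    Mmat n α b i j = 1 := by
  unfold Mmat; rw [Matrix.of_apply]
  split_ifs <;> first | rfl | (exfalso; omega)

lemma Mmat_diag_odd {i j : Fin (n+1)} (hp : i.val % 2 = 1) (hn : i.val < n)
    (hj : j.val = i.val) : Mmat n α b i j = (starRingEnd ℂ) (α i.val) := by
  have hi := i.isLt; have hj' := j.isLt
  unfold Mmat; rw [Matrix.of_apply]
  split_ifs <;> first | rfl | (exfalso; omega)

lemma Mmat_superdiag {i j : Fin (n+1)} (hp : i.val % 2 = 1) (hn : i.val < n)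
    (hj : j.val = i.val + 1) : Mmat n α b i j = rho (α i.val) := by
  have hi := i.isLt; have hj' := j.isLt
  unfold Mmat; rw [Matrix.of_apply]
  split_ifs <;> first | rfl | (exfalso; omega)

lemma Mmat_subdiag {i j : Fin (n+1)} (hp : i.val % 2 = 0) (h0 : i.val ≠ 0)
    (hj : j.val = i.val - 1) : Mmat n α b i j = rho (α (i.val - 1)) := by
  have hi := i.isLt; have hj' := j.isLt
  unfold Mmat; rw [Matrix.of_apply]
  split_ifs <;> first | rfl | (exfalso; omega)

lemma Mmat_diag_even {i j : Fin (n+1)} (hp : i.val % 2 = 0) (h0 : i.val ≠ 0)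
    (hj : j.val = i.val) : Mmat n α b i j = -(α (i.val - 1)) := by
  have hi := i.isLt; have hj' := j.isLt
  unfold Mmat; rw [Matrix.of_apply]
  split_ifs <;> first | rfl | (exfalso; omega)

lemma Mmat_corner {i j : Fin (n+1)} (hn2 : n % 2 = 1) (hi : i.val = n)
    (hj : j.val = n) : Mmat n α b i j = (starRingEnd ℂ) b := by
  unfold Mmat; rw [Matrix.of_apply]
  split_ifs <;> first | rfl | (exfalso; omega)

end Entries

section Unitary
variable {n : ℕ} {α : ℕ → ℂ} {b : ℂ}

lemma unit1 (a : ℂ) (h : ‖a‖ < 1) :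
    star ((starRingEnd ℂ) a) * (starRingEnd ℂ) a + star (rho a) * rho a = 1 := by
  rw [star_rho, rho_mul_self a h]
  have : star ((starRingEnd ℂ) a) * (starRingEnd ℂ) a = ((‖a‖ ^ 2 : ℝ) : ℂ) := by
    rw [Complex.star_def, Complex.conj_conj, mul_comm]
    exact conj_mul_self a
  rw [this, ← Complex.ofReal_add]
  norm_num

lemma unit2 (a : ℂ) (h : ‖a‖ < 1) :
    star (rho a) * rho a + star (-a) * (-a) = 1 := by
  rw [star_rho, rho_mul_self a h, star_neg, neg_mul_neg, Complex.star_def, conj_mul_self,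
    ← Complex.ofReal_add]
  norm_num

lemma unit3 (a : ℂ) :
    star ((starRingEnd ℂ) a) * rho a + star (rho a) * (-a) = 0 := by
  rw [star_rho, Complex.star_def, Complex.conj_conj]; ring

lemma unit4 (a : ℂ) :
    star (rho a) * (starRingEnd ℂ) a + star (-a) * rho a = 0 := by
  rw [star_rho, star_neg, Complex.star_def]; ring

lemma conj_mul_self_unit {c : ℂ} (hc : ‖c‖ = 1) :
    star ((starRingEnd ℂ) c) * (starRingEnd ℂ) c = 1 := by
  rw [Complex.star_def, Complex.conj_conj, mul_comm, conj_mul_self, hc]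
  norm_num

lemma L_unitary (hα : ∀ j < n, ‖α j‖ < 1) (hb : ‖b‖ = 1) :
    (Lmat n α b)ᴴ * Lmat n α b = 1 := by
  ext i j
  rw [Matrix.mul_apply, Matrix.one_apply]
  simp only [Matrix.conjTranspose_apply]
  by_cases hij : i.val / 2 = j.val / 2
  · have hi := i.isLt; have hj := j.isLt
    set p := 2 * (i.val / 2) with hp
    by_cases hpn : p + 1 ≤ n
    · rw [Finset.sum_eq_add (⟨p, by omega⟩ : Fin (n+1)) (⟨p+1, by omega⟩ : Fin (n+1))
        (by simp [Fin.ext_iff])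
        (fun c _ hc => by
          have h1 : c.val ≠ p := fun h => hc.1 (Fin.ext h)
          have h2 : c.val ≠ p + 1 := fun h => hc.2 (Fin.ext h)
          rw [Lmat_eq_zero (i := c) (j := i) (by omega), star_zero, zero_mul])
        (fun h => absurd (Finset.mem_univ _) h)
        (fun h => absurd (Finset.mem_univ _) h)]
      have hiv : i.val = p ∨ i.val = p + 1 := by omega
      have hjv : j.val = p ∨ j.val = p + 1 := by omega
      have hplt : p < n := by omega
      have hp2 : p % 2 = 0 := by omega
      have ha := hα p hplt
      rcases hiv with hiv | hiv <;> rcases hjv with hjv | hjv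
      · rw [if_pos (Fin.ext (by omega) : i = j),
          Lmat_diag_even hp2 hplt hiv, Lmat_diag_even hp2 hplt hjv,
          Lmat_subdiag (by omega : (p+1) % 2 = 1) (by omega : i.val = p + 1 - 1),
          Lmat_subdiag (by omega : (p+1) % 2 = 1) (by omega : j.val = p + 1 - 1)]
        simp only [Nat.add_sub_cancel]
        exact unit1 (α p) ha
      · rw [if_neg (Fin.ne_of_val_ne (by omega)),
          Lmat_diag_even hp2 hplt hiv, Lmat_superdiag hp2 hplt hjv,
          Lmat_subdiag (by omega : (p+1) % 2 = 1) (by omega : i.val = p + 1 - 1),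
          Lmat_diag_odd (by omega : (p+1) % 2 = 1) hjv]
        simp only [Nat.add_sub_cancel]
        exact unit3 (α p)
      · rw [if_neg (Fin.ne_of_val_ne (by omega)),
          Lmat_superdiag hp2 hplt hiv, Lmat_diag_even hp2 hplt hjv,
          Lmat_diag_odd (by omega : (p+1) % 2 = 1) hiv,
          Lmat_subdiag (by omega : (p+1) % 2 = 1) (by omega : j.val = p + 1 - 1)]
        simp only [Nat.add_sub_cancel]
        exact unit4 (α p)
      · rw [if_pos (Fin.ext (by omega) : i = j),
          Lmat_superdiag hp2 hplt hiv, Lmat_superdiag hp2 hplt hjv,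
          Lmat_diag_odd (by omega : (p+1) % 2 = 1) hiv,
          Lmat_diag_odd (by omega : (p+1) % 2 = 1) hjv]
        simp only [Nat.add_sub_cancel]
        exact unit2 (α p) ha
    · have hn2 : n % 2 = 0 := by omega
      have hin : i.val = n := by omega
      have hjn : j.val = n := by omega
      rw [Fintype.sum_eq_single (⟨n, by omega⟩ : Fin (n+1))
        (fun c hc => by
          have h1 : c.val ≠ n := fun h => hc (Fin.ext h)
          rw [Lmat_eq_zero (i := c) (j := i) (by omega), star_zero, zero_mul])]
      rw [if_pos (Fin.ext (by omega) : i = j), Lmat_corner hn2 rfl hin,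
        Lmat_corner hn2 rfl hjn]
      exact conj_mul_self_unit hb
  · rw [if_neg (fun h => hij (by rw [h])), Finset.sum_eq_zero]
    intro k _
    rcases eq_or_ne (k.val / 2) (i.val / 2) with h | h
    · rw [Lmat_eq_zero (i := k) (j := j) (by omega), mul_zero]
    · rw [Lmat_eq_zero (i := k) (j := i) h, star_zero, zero_mul]

lemma M_unitary (hα : ∀ j < n, ‖α j‖ < 1) (hb : ‖b‖ = 1) :
    (Mmat n α b)ᴴ * Mmat n α b = 1 := by
  ext i j
  rw [Matrix.mul_apply, Matrix.one_apply]
  simp only [Matrix.conjTranspose_apply]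
  by_cases hij : (i.val + 1) / 2 = (j.val + 1) / 2
  · have hi := i.isLt; have hj := j.isLt
    set s := (i.val + 1) / 2 with hs
    rcases Nat.eq_zero_or_pos s with hs0 | hs1
    · have hin : i.val = 0 := by omega
      have hjn : j.val = 0 := by omega
      rw [Fintype.sum_eq_single (⟨0, by omega⟩ : Fin (n+1))
        (fun c hc => by
          have h1 : c.val ≠ 0 := fun h => hc (Fin.ext h)
          rw [Mmat_eq_zero (i := c) (j := i) (by omega), star_zero, zero_mul])]
      rw [if_pos (Fin.ext (by omega) : i = j), Mmat_00 rfl hin, Mmat_00 rfl hjn]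
      simp
    · set q := 2 * s - 1 with hq
      by_cases hpn : q + 1 ≤ n
      · rw [Finset.sum_eq_add (⟨q, by omega⟩ : Fin (n+1)) (⟨q+1, by omega⟩ : Fin (n+1))
          (by simp [Fin.ext_iff])
          (fun c _ hc => by
            have h1 : c.val ≠ q := fun h => hc.1 (Fin.ext h)
            have h2 : c.val ≠ q + 1 := fun h => hc.2 (Fin.ext h)
            rw [Mmat_eq_zero (i := c) (j := i) (by omega), star_zero, zero_mul])
          (fun h => absurd (Finset.mem_univ _) h)
          (fun h => absurd (Finset.mem_univ _) h)]
        have hiv : i.val = q ∨ i.val = q + 1 := by omega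
        have hjv : j.val = q ∨ j.val = q + 1 := by omega
        have hplt : q < n := by omega
        have hp2 : q % 2 = 1 := by omega
        have ha := hα q hplt
        rcases hiv with hiv | hiv <;> rcases hjv with hjv | hjv
        · rw [if_pos (Fin.ext (by omega) : i = j),
            Mmat_diag_odd hp2 hplt hiv, Mmat_diag_odd hp2 hplt hjv,
            Mmat_subdiag (by omega : (q+1) % 2 = 0) (by omega : q + 1 ≠ 0)
              (by omega : i.val = q + 1 - 1),
            Mmat_subdiag (by omega : (q+1) % 2 = 0) (by omega : q + 1 ≠ 0)
              (by omega : j.val = q + 1 - 1)]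
          simp only [Nat.add_sub_cancel]
          exact unit1 (α q) ha
        · rw [if_neg (Fin.ne_of_val_ne (by omega)),
            Mmat_diag_odd hp2 hplt hiv, Mmat_superdiag hp2 hplt hjv,
            Mmat_subdiag (by omega : (q+1) % 2 = 0) (by omega : q + 1 ≠ 0)
              (by omega : i.val = q + 1 - 1),
            Mmat_diag_even (by omega : (q+1) % 2 = 0) (by omega : q + 1 ≠ 0) hjv]
          simp only [Nat.add_sub_cancel]
          exact unit3 (α q)
        · rw [if_neg (Fin.ne_of_val_ne (by omega)),
            Mmat_superdiag hp2 hplt hiv, Mmat_diag_odd hp2 hplt hjv,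
            Mmat_diag_even (by omega : (q+1) % 2 = 0) (by omega : q + 1 ≠ 0) hiv,
            Mmat_subdiag (by omega : (q+1) % 2 = 0) (by omega : q + 1 ≠ 0)
              (by omega : j.val = q + 1 - 1)]
          simp only [Nat.add_sub_cancel]
          exact unit4 (α q)
        · rw [if_pos (Fin.ext (by omega) : i = j),
            Mmat_superdiag hp2 hplt hiv, Mmat_superdiag hp2 hplt hjv,
            Mmat_diag_even (by omega : (q+1) % 2 = 0) (by omega : q + 1 ≠ 0) hiv,
            Mmat_diag_even (by omega : (q+1) % 2 = 0) (by omega : q + 1 ≠ 0) hjv]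
          simp only [Nat.add_sub_cancel]
          exact unit2 (α q) ha
      · have hn2 : n % 2 = 1 := by omega
        have hin : i.val = n := by omega
        have hjn : j.val = n := by omega
        rw [Fintype.sum_eq_single (⟨n, by omega⟩ : Fin (n+1))
          (fun c hc => by
            have h1 : c.val ≠ n := fun h => hc (Fin.ext h)
            rw [Mmat_eq_zero (i := c) (j := i) (by omega), star_zero, zero_mul])]
        rw [if_pos (Fin.ext (by omega) : i = j), Mmat_corner hn2 rfl hin,
          Mmat_corner hn2 rfl hjn]
        exact conj_mul_self_unit hb
  · rw [if_neg (fun h => hij (by rw [h])), Finset.sum_eq_zero]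
    intro k _
    rcases eq_or_ne ((k.val + 1) / 2) ((i.val + 1) / 2) with h | h
    · rw [Mmat_eq_zero (i := k) (j := j) (by omega), mul_zero]
    · rw [Mmat_eq_zero (i := k) (j := i) h, star_zero, zero_mul]

end Unitary

section Rows
variable {n : ℕ} {α : ℕ → ℂ} {b : ℂ}

lemma L_mulVec_even (w : Fin (n+1) → ℂ) (p : ℕ) (hp2 : p % 2 = 0) (hpn : p < n) :
    (Lmat n α b).mulVec w ⟨p, by omega⟩ =
      (starRingEnd ℂ) (α p) * w ⟨p, by omega⟩ + rho (α p) * w ⟨p+1, by omega⟩ := by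
  rw [Matrix.mulVec, dotProduct]
  rw [Finset.sum_eq_add (⟨p, by omega⟩ : Fin (n+1)) (⟨p+1, by omega⟩ : Fin (n+1))
    (by simp [Fin.ext_iff])
    (fun c _ hc => by
      have h1 : c.val ≠ p := fun h => hc.1 (Fin.ext h)
      have h2 : c.val ≠ p + 1 := fun h => hc.2 (Fin.ext h)
      rw [Lmat_eq_zero (show p / 2 ≠ c.val / 2 by omega), zero_mul])
    (fun h => absurd (Finset.mem_univ _) h)
    (fun h => absurd (Finset.mem_univ _) h)]
  rw [Lmat_diag_even hp2 hpn rfl, Lmat_superdiag hp2 hpn rfl]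

lemma L_mulVec_odd (w : Fin (n+1) → ℂ) (p : ℕ) (hp2 : p % 2 = 0) (hpn : p < n) :
    (Lmat n α b).mulVec w ⟨p+1, by omega⟩ =
      rho (α p) * w ⟨p, by omega⟩ + (-(α p)) * w ⟨p+1, by omega⟩ := by
  rw [Matrix.mulVec, dotProduct]
  rw [Finset.sum_eq_add (⟨p, by omega⟩ : Fin (n+1)) (⟨p+1, by omega⟩ : Fin (n+1))
    (by simp [Fin.ext_iff])
    (fun c _ hc => by
      have h1 : c.val ≠ p := fun h => hc.1 (Fin.ext h)
      have h2 : c.val ≠ p + 1 := fun h => hc.2 (Fin.ext h)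
      rw [Lmat_eq_zero (show (p+1) / 2 ≠ c.val / 2 by omega), zero_mul])
    (fun h => absurd (Finset.mem_univ _) h)
    (fun h => absurd (Finset.mem_univ _) h)]
  rw [Lmat_subdiag (i := (⟨p+1, by omega⟩ : Fin (n+1))) (by omega : (p+1) % 2 = 1)
      (by show p = p + 1 - 1; omega),
    Lmat_diag_odd (by omega : (p+1) % 2 = 1) rfl]
  simp only [Nat.add_sub_cancel]

lemma M_mulVec_zero (v : Fin (n+1) → ℂ) :
    (Mmat n α b).mulVec v ⟨0, by omega⟩ = v ⟨0, by omega⟩ := by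
  rw [Matrix.mulVec, dotProduct]
  rw [Fintype.sum_eq_single (⟨0, by omega⟩ : Fin (n+1))
    (fun c hc => by
      have h1 : c.val ≠ 0 := fun h => hc (Fin.ext h)
      rw [Mmat_eq_zero (show (0+1) / 2 ≠ (c.val+1) / 2 by omega), zero_mul])]
  rw [Mmat_00 rfl rfl, one_mul]

lemma M_mulVec_odd (v : Fin (n+1) → ℂ) (p : ℕ) (hp2 : p % 2 = 1) (hpn : p < n) :
    (Mmat n α b).mulVec v ⟨p, by omega⟩ =
      (starRingEnd ℂ) (α p) * v ⟨p, by omega⟩ + rho (α p) * v ⟨p+1, by omega⟩ := by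
  rw [Matrix.mulVec, dotProduct]
  rw [Finset.sum_eq_add (⟨p, by omega⟩ : Fin (n+1)) (⟨p+1, by omega⟩ : Fin (n+1))
    (by simp [Fin.ext_iff])
    (fun c _ hc => by
      have h1 : c.val ≠ p := fun h => hc.1 (Fin.ext h)
      have h2 : c.val ≠ p + 1 := fun h => hc.2 (Fin.ext h)
      rw [Mmat_eq_zero (show (p+1) / 2 ≠ (c.val+1) / 2 by omega), zero_mul])
    (fun h => absurd (Finset.mem_univ _) h)
    (fun h => absurd (Finset.mem_univ _) h)]
  rw [Mmat_diag_odd hp2 hpn rfl, Mmat_superdiag hp2 hpn rfl]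

lemma M_mulVec_even (v : Fin (n+1) → ℂ) (p : ℕ) (hp2 : p % 2 = 1) (hpn : p < n) :
    (Mmat n α b).mulVec v ⟨p+1, by omega⟩ =
      rho (α p) * v ⟨p, by omega⟩ + (-(α p)) * v ⟨p+1, by omega⟩ := by
  rw [Matrix.mulVec, dotProduct]
  rw [Finset.sum_eq_add (⟨p, by omega⟩ : Fin (n+1)) (⟨p+1, by omega⟩ : Fin (n+1))
    (by simp [Fin.ext_iff])
    (fun c _ hc => by
      have h1 : c.val ≠ p := fun h => hc.1 (Fin.ext h)
      have h2 : c.val ≠ p + 1 := fun h => hc.2 (Fin.ext h)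
      rw [Mmat_eq_zero (show (p+1+1) / 2 ≠ (c.val+1) / 2 by omega), zero_mul])
    (fun h => absurd (Finset.mem_univ _) h)
    (fun h => absurd (Finset.mem_univ _) h)]
  rw [Mmat_subdiag (i := (⟨p+1, by omega⟩ : Fin (n+1))) (by omega : (p+1) % 2 = 0)
      (by omega : p + 1 ≠ 0) (by show p = p + 1 - 1; omega),
    Mmat_diag_even (by omega : (p+1) % 2 = 0) (by omega : p + 1 ≠ 0) rfl]
  simp only [Nat.add_sub_cancel]

end Rows

lemma solve2 (a w1 w2 : ℂ) (h : ‖a‖ < 1)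
    (e1 : (starRingEnd ℂ) a * w1 + rho a * w2 = 0)
    (e2 : rho a * w1 + (-a) * w2 = 0) : w2 = 0 := by
  have key : rho a * rho a + (starRingEnd ℂ) a * a = 1 := by
    rw [rho_mul_self a h, conj_mul_self, ← Complex.ofReal_add]; norm_num
  linear_combination rho a * e1 - (starRingEnd ℂ) a * e2 - w2 * key

section Propagation
variable {n : ℕ} {α : ℕ → ℂ} {b : ℂ}

lemma eigen_trivial (hα : ∀ j < n, ‖α j‖ < 1) {μ : ℂ} (hμ : μ ≠ 0)
    {v : Fin (n+1) → ℂ} (hC : (CMV n α b).mulVec v = μ • v)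
    (h0 : v ⟨0, by omega⟩ = 0) : v = 0 := by
  set w := (Mmat n α b).mulVec v with hw
  have hLw : ∀ r : Fin (n+1), (Lmat n α b).mulVec w r = μ * v r := by
    intro r
    rw [hw, Matrix.mulVec_mulVec]
    show (CMV n α b).mulVec v r = μ * v r
    rw [hC]; simp
  suffices H : ∀ t : ℕ, ∀ i : Fin (n+1), i.val < t → v i = 0 by
    funext i; exact H (n+2) i (by omega)
  intro t
  induction t with
  | zero => exact fun i hi => absurd hi (by omega)
  | succ t ih =>
    intro i hi
    rcases Nat.lt_or_ge i.val t with h | h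
    · exact ih i h
    have hit : i.val = t := by omega
    have htn : t ≤ n := by omega
    rcases Nat.eq_zero_or_pos t with rfl | ht1
    · rw [(Fin.ext hit : i = ⟨0, by omega⟩)]; exact h0
    rcases Nat.even_or_odd t with ⟨u, hu⟩ | ⟨u, hu⟩
    · -- t even, t ≥ 2 ; p := t - 2
      set p := t - 2 with hp
      have hp2 : p % 2 = 0 := by omega
      have hpn : p < n := by omega
      have e1 := hLw ⟨p, by omega⟩
      rw [L_mulVec_even w p hp2 hpn] at e1
      have e2 := hLw ⟨p+1, by omega⟩
      rw [L_mulVec_odd w p hp2 hpn] at e2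
      rw [ih ⟨p, by omega⟩ (show p < t by omega)] at e1
      rw [ih ⟨p+1, by omega⟩ (show p+1 < t by omega)] at e2
      have hw1 : w ⟨p+1, by omega⟩ = 0 :=
        solve2 (α p) (w ⟨p, by omega⟩) (w ⟨p+1, by omega⟩) (hα p hpn)
          (by linear_combination e1) (by linear_combination e2)
      have hq2 : (p+1) % 2 = 1 := by omega
      have hqn : p + 1 < n := by omega
      have e3 : w ⟨p+1, by omega⟩ =
          (starRingEnd ℂ) (α (p+1)) * v ⟨p+1, by omega⟩ +
            rho (α (p+1)) * v ⟨p+1+1, by omega⟩ := M_mulVec_odd v (p+1) hq2 hqn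
      rw [hw1, ih ⟨p+1, by omega⟩ (show p+1 < t by omega)] at e3
      have : v ⟨p+1+1, by omega⟩ = 0 := by
        have h3 : rho (α (p+1)) * v ⟨p+1+1, by omega⟩ = 0 := by linear_combination -e3
        exact (mul_eq_zero.mp h3).resolve_left (rho_ne_zero _ (hα (p+1) hqn))
      rw [(Fin.ext (by omega : i.val = p + 1 + 1) : i = ⟨p+1+1, by omega⟩)]
      exact this
    · -- t odd ; p := t - 1
      set p := t - 1 with hp
      have hp2 : p % 2 = 0 := by omega
      have hpn : p < n := by omega
      have hwp : w ⟨p, by omega⟩ = 0 := by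
        rcases Nat.eq_zero_or_pos p with hp0 | hp1
        · rw [(Fin.ext hp0 : (⟨p, by omega⟩ : Fin (n+1)) = ⟨0, by omega⟩), hw,
            M_mulVec_zero v]
          exact h0
        · have hq2 : (p-1) % 2 = 1 := by omega
          have hqn : p - 1 < n := by omega
          have e0 : w ⟨p-1+1, by omega⟩ =
              rho (α (p-1)) * v ⟨p-1, by omega⟩ +
                (-(α (p-1))) * v ⟨p-1+1, by omega⟩ := M_mulVec_even v (p-1) hq2 hqn
          rw [ih ⟨p-1, by omega⟩ (show p-1 < t by omega),
            ih ⟨p-1+1, by omega⟩ (show p-1+1 < t by omega)] at e0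
          rw [(Fin.ext (by omega : (p:ℕ) = p-1+1) : (⟨p, by omega⟩ : Fin (n+1)) = ⟨p-1+1, by omega⟩), e0]
          ring
      have e1 := hLw ⟨p, by omega⟩
      rw [L_mulVec_even w p hp2 hpn, hwp, ih ⟨p, by omega⟩ (show p < t by omega)] at e1
      have hw1 : w ⟨p+1, by omega⟩ = 0 := by
        have : rho (α p) * w ⟨p+1, by omega⟩ = 0 := by linear_combination e1
        exact (mul_eq_zero.mp this).resolve_left (rho_ne_zero _ (hα p hpn))
      have e2 := hLw ⟨p+1, by omega⟩
      rw [L_mulVec_odd w p hp2 hpn, hwp, hw1] at e2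
      have : v ⟨p+1, by omega⟩ = 0 := by
        have h' : μ * v ⟨p+1, by omega⟩ = 0 := by linear_combination -e2
        exact (mul_eq_zero.mp h').resolve_left hμ
      rw [(Fin.ext (by omega : i.val = p + 1) : i = ⟨p+1, by omega⟩)]
      exact this

end Propagation

section Finale
variable {n : ℕ} {α : ℕ → ℂ} {b : ℂ}

lemma CMV_unitary (hα : ∀ j < n, ‖α j‖ < 1) (hb : ‖b‖ = 1) :
    (CMV n α b)ᴴ * CMV n α b = 1 := by
  unfold CMV
  rw [Matrix.conjTranspose_mul, Matrix.mul_assoc, ← Matrix.mul_assoc (Lmat n α b)ᴴ,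
    L_unitary hα hb, Matrix.one_mul, M_unitary hα hb]

lemma norm_pres (hα : ∀ j < n, ‖α j‖ < 1) (hb : ‖b‖ = 1)
    (v : Fin (n+1) → ℂ) :
    ∑ k, Complex.normSq ((CMV n α b).mulVec v k) = ∑ k, Complex.normSq (v k) := by
  have key : ∀ (u : Fin (n+1) → ℂ),
      dotProduct (star u) u = ((∑ k, Complex.normSq (u k) : ℝ) : ℂ) := by
    intro u
    rw [dotProduct]
    push_cast
    refine Finset.sum_congr rfl fun k _ => ?_
    rw [Pi.star_apply, Complex.star_def, mul_comm, Complex.mul_conj]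
  have h1 : dotProduct (star ((CMV n α b).mulVec v)) ((CMV n α b).mulVec v)
      = dotProduct (star v) v := by
    rw [Matrix.star_mulVec, ← dotProduct_mulVec, Matrix.mulVec_mulVec,
      CMV_unitary hα hb, Matrix.one_mulVec]
  rw [key, key] at h1
  exact_mod_cast h1

end Finale

/-- The trailing `(n-m)×(n-m)` principal submatrix `C₂₂` of the CMV matrix
`C(α₀,…,α_{n-1},bₙ)` has no eigenvalues on the unit circle. -/
theorem stmt_9 (n m : ℕ) (hm : m < n) (α : ℕ → ℂ) (hα : ∀ j < n, ‖α j‖ < 1)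
    (b : ℂ) (hb : ‖b‖ = 1) :
    ∀ μ ∈ spectrum ℂ
        ((CMV n α b).submatrix
          (fun i : Fin (n - m) => (⟨m + 1 + i.val, by omega⟩ : Fin (n+1)))
          (fun i : Fin (n - m) => (⟨m + 1 + i.val, by omega⟩ : Fin (n+1)))),
      ‖μ‖ ≠ 1 := by
  intro μ hspec hμ1
  set f : Fin (n - m) → Fin (n + 1) :=
    fun i => (⟨m + 1 + i.val, by omega⟩ : Fin (n+1)) with hf
  set A22 := (CMV n α b).submatrix f f with hA22
  rw [spectrum.mem_iff] at hspec
  have hdet : ((algebraMap ℂ (Matrix (Fin (n-m)) (Fin (n-m)) ℂ)) μ - A22).det = 0 := by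
    by_contra h
    exact hspec ((Matrix.isUnit_iff_isUnit_det _).mpr (isUnit_iff_ne_zero.mpr h))
  obtain ⟨x, hx0, hxv⟩ := Matrix.exists_mulVec_eq_zero_iff.mpr hdet
  have hxx : A22.mulVec x = μ • x := by
    rw [Matrix.sub_mulVec, sub_eq_zero] at hxv
    rw [← hxv, Algebra.algebraMap_eq_smul_one, Matrix.smul_mulVec, Matrix.one_mulVec]
  set v : Fin (n+1) → ℂ :=
    fun j => if h : m < j.val then x ⟨j.val - (m+1), by have := j.isLt; omega⟩ else 0
    with hv
  have hveq : ∀ i : Fin (n-m), v ⟨m + 1 + i.val, by have := i.isLt; omega⟩ = x i := by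
    intro i
    have hi := i.isLt
    simp only [hv]
    rw [dif_pos (show m < m + 1 + i.val from by omega)]
    exact congrArg x (Fin.ext (show m + 1 + i.val - (m+1) = i.val from by omega))
  have hvzero : ∀ k : Fin (n+1), ¬ m < k.val → v k = 0 := fun k hk => dif_neg hk
  have hpartial : ∀ k : Fin (n+1), m < k.val →
      (CMV n α b).mulVec v k = μ * v k := by
    intro k hk
    have hkn := k.isLt
    set e : Fin (n-m) ↪ Fin (n+1) :=
      ⟨fun i => ⟨m + 1 + i.val, by have := i.isLt; omega⟩,
       fun a b h => Fin.ext (by have := congrArg Fin.val h; simpa using this)⟩ with he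
    have hsum : (CMV n α b).mulVec v k = ∑ i' : Fin (n-m), CMV n α b k (e i') * x i' := by
      rw [Matrix.mulVec, dotProduct]
      rw [← Finset.sum_subset (Finset.subset_univ (Finset.univ.map e))
        (fun j _ hj => by
          have hjm : ¬ m < j.val := by
            intro hmj
            exact hj (Finset.mem_map.mpr ⟨⟨j.val - (m+1), by have := j.isLt; omega⟩,
              Finset.mem_univ _,
              Fin.ext (show m + 1 + (j.val - (m+1)) = j.val from by have := j.isLt; omega)⟩)
          rw [hvzero j hjm, mul_zero])]
      rw [Finset.sum_map]
      exact Finset.sum_congr rfl fun i' _ => congrArg (CMV n α b k (e i') * ·) (hveq i')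
    have hk2 := congrFun hxx ⟨k.val - (m+1), by omega⟩
    rw [Matrix.mulVec, dotProduct, hA22] at hk2
    simp only [Matrix.submatrix_apply] at hk2
    have hfk : f ⟨k.val - (m+1), by omega⟩ = k :=
      Fin.ext (show m + 1 + (k.val - (m+1)) = k.val from by omega)
    rw [hfk] at hk2
    have hvk : v k = x ⟨k.val - (m+1), by omega⟩ := by
      simp only [hv]
      rw [dif_pos hk]
    rw [hsum, hvk]
    calc ∑ i' : Fin (n-m), CMV n α b k (e i') * x i'
        = ∑ j : Fin (n-m), CMV n α b k (f j) * x j :=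
          Finset.sum_congr rfl (fun j _ => rfl)
      _ = (μ • x) ⟨k.val - (m+1), by omega⟩ := hk2
      _ = μ * x ⟨k.val - (m+1), by omega⟩ := rfl
  set u := (CMV n α b).mulVec v with hu
  have hnorm := norm_pres hα hb v
  rw [← hu] at hnorm
  have hμsq : Complex.normSq μ = 1 := by
    rw [Complex.normSq_eq_norm_sq, hμ1]; norm_num
  have hsum0 : ∑ k, (if m < k.val then 0 else Complex.normSq (u k)) = 0 := by
    have h2 : ∑ k, (if m < k.val then 0 else Complex.normSq (u k)) =
        ∑ k, (Complex.normSq (u k) - Complex.normSq (v k)) := by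
      refine Finset.sum_congr rfl fun k _ => ?_
      by_cases h : m < k.val
      · rw [if_pos h, hpartial k h, Complex.normSq_mul, hμsq, one_mul]; ring
      · rw [if_neg h, hvzero k h, map_zero, sub_zero]
    rw [h2, Finset.sum_sub_distrib, hnorm, sub_self]
  have hzero : ∀ k : Fin (n+1), ¬ m < k.val → u k = 0 := by
    intro k hk
    have h3 := (Finset.sum_eq_zero_iff_of_nonneg
      (fun i _ => by
        by_cases h : m < i.val
        · simp [h]
        · simp [h, Complex.normSq_nonneg])).mp hsum0 k (Finset.mem_univ k)
    rw [if_neg hk] at h3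
    exact Complex.normSq_eq_zero.mp h3
  have hfull : (CMV n α b).mulVec v = μ • v := by
    funext k
    by_cases hk : m < k.val
    · show u k = (μ • v) k
      rw [hpartial k hk, Pi.smul_apply, smul_eq_mul]
    · show u k = (μ • v) k
      rw [hzero k hk, Pi.smul_apply, hvzero k hk, smul_zero]
  have hμ0 : μ ≠ 0 := by
    intro h; rw [h] at hμ1; simp at hμ1
  have hv0 : v ⟨0, by omega⟩ = 0 := hvzero ⟨0, by omega⟩ (show ¬ m < 0 from by omega)
  have hvv := eigen_trivial hα hμ0 hfull hv0
  apply hx0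
  funext i
  have h4 := congrFun hvv ⟨m + 1 + i.val, by have := i.isLt; omega⟩
  rw [hveq i] at h4
  exact h4
end
end

section
/- Let αⱼ ∈ 𝔻 (j=0,…,n-1), bₙ, b_{n-1} ∈ S^1, and γ_{n-1} := (α_{n-1} - b_{n-1})/(ᾱ_{n-1} b_{n-1} - 1). Then the CMV matrices C(α₀,…,α_{n-1}, bₙ) (size n+1) and C(α₀,…,α_{n-2}, b_{n-1}) (size n) have at most one common eigenvalue, and if they have a common eigenvalue it equals b̄ₙ γ_{n-1}. -/
noncomputable section
open Matrix Polynomial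

namespace CMVaux

lemma conj_rho (a : ℂ) : (starRingEnd ℂ) (rho a) = rho a := Complex.conj_ofReal _

lemma rho_sq {a : ℂ} (h : ‖a‖ ≤ 1) :
    rho a ^ 2 = 1 - (starRingEnd ℂ) a * a := by
  have h0 : (0:ℝ) ≤ 1 - ‖a‖ ^ 2 := by
    nlinarith [norm_nonneg a]
  have h1 : (starRingEnd ℂ) a * a = ((‖a‖ ^ 2 : ℝ) : ℂ) := by
    rw [mul_comm, Complex.mul_conj, Complex.sq_norm]
  rw [rho, ← Complex.ofReal_pow, Real.sq_sqrt h0, h1]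
  push_cast
  ring

lemma conj_mul_self_of_abs_one {b : ℂ} (hb : ‖b‖ = 1) :
    (starRingEnd ℂ) b * b = 1 := by
  rw [mul_comm, Complex.mul_conj]
  norm_cast
  rw [← Complex.sq_norm, hb, one_pow]

/-- The pair of monic orthogonal polynomial values `(Φ_k(z), Φ_k*(z))`. -/
def PQ (α : ℕ → ℂ) (z : ℂ) : ℕ → ℂ × ℂ
  | 0 => (1, 1)
  | k+1 =>
      (z * (PQ α z k).1 - (starRingEnd ℂ) (α k) * (PQ α z k).2,
       (PQ α z k).2 - α k * z * (PQ α z k).1)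

lemma PQ_zero_snd (α : ℕ → ℂ) (k : ℕ) : (PQ α 0 k).2 = 1 := by
  induction k with
  | zero => rfl
  | succ k ih => simp [PQ, ih]

lemma PQ_ne_zero (α : ℕ → ℂ) (z : ℂ) (hz : z ≠ 0) (k : ℕ)
    (hα : ∀ j < k, ‖α j‖ < 1) :
    ¬((PQ α z k).1 = 0 ∧ (PQ α z k).2 = 0) := by
  induction k with
  | zero => simp [PQ]
  | succ k ih =>
      rintro ⟨h1, h2⟩
      simp only [PQ] at h1 h2
      have hk : ‖α k‖ < 1 := hα k (by omega)
      have e2 : (PQ α z k).2 = α k * z * (PQ α z k).1 := sub_eq_zero.mp h2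
      have e1 : z * (PQ α z k).1 = (starRingEnd ℂ) (α k) * (PQ α z k).2 :=
        sub_eq_zero.mp h1
      rw [e2] at e1
      have hfac : z * (PQ α z k).1 * (1 - (starRingEnd ℂ) (α k) * α k) = 0 := by
        linear_combination e1
      have hne : (1 : ℂ) - (starRingEnd ℂ) (α k) * α k ≠ 0 := by
        have : (starRingEnd ℂ) (α k) * α k = ((‖α k‖ ^ 2 : ℝ) : ℂ) := by
          rw [mul_comm, Complex.mul_conj, Complex.sq_norm]
        rw [this, sub_ne_zero]
        intro hcontra
        have h1r : (1 : ℝ) = ‖α k‖ ^ 2 := by exact_mod_cast hcontra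
        nlinarith [norm_nonneg (α k)]
      have hp : (PQ α z k).1 = 0 := by
        rcases mul_eq_zero.mp hfac with h | h
        · rcases mul_eq_zero.mp h with h' | h'
          · exact absurd h' hz
          · exact h'
        · exact absurd h hne
      exact ih (fun j hj => hα j (by omega)) ⟨hp, by rw [e2, hp]; ring⟩

/-- generic tridiagonal matrix built from sequences `d`, `e`. -/
def tri (d e : ℕ → ℂ) (m : ℕ) : Matrix (Fin m) (Fin m) ℂ :=
  Matrix.of fun i j =>
    if i.val = j.val then d i.val
    else if i.val + 1 = j.val then e i.val
    else if j.val + 1 = i.val then e j.val else 0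

lemma tri_det_zero (d e : ℕ → ℂ) : (tri d e 0).det = 1 := Matrix.det_fin_zero

lemma tri_det_one (d e : ℕ → ℂ) : (tri d e 1).det = d 0 := by
  rw [Matrix.det_fin_one]; rfl

lemma tri_apply' (d e : ℕ → ℂ) (m : ℕ) (i j : Fin m) :
    tri d e m i j = (if i.val = j.val then d i.val
      else if i.val + 1 = j.val then e i.val
      else if j.val + 1 = i.val then e (i.val - 1) else 0) := by
  simp only [tri, Matrix.of_apply]
  split_ifs <;> first | rfl | (exfalso; omega) | (congr 1; omega)

lemma sum_two {m : ℕ} (f : Fin m → ℂ) (a b : Fin m) (hab : a ≠ b)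
    (h : ∀ k, k ≠ a → k ≠ b → f k = 0) : ∑ k, f k = f a + f b := by
  classical
  rw [← Finset.sum_subset (Finset.subset_univ ({a, b} : Finset (Fin m)))]
  · rw [Finset.sum_pair hab]
  · intro x _ hx
    apply h <;> intro hh <;> subst hh <;> simp at hx

lemma succAbove_val {m : ℕ} (p : Fin (m+1)) (k : Fin m) :
    (p.succAbove k).val = if k.val < p.val then k.val else k.val + 1 := by
  rw [Fin.succAbove]
  split_ifs with h1 h2 h2 <;> simp_all [Fin.lt_def, Fin.castSucc, Fin.succ]

lemma tri_det_succ (d e : ℕ → ℂ) (m : ℕ) :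
    (tri d e (m+2)).det = d (m+1) * (tri d e (m+1)).det - (e m)^2 * (tri d e m).det := by
  have hsub1 : ((tri d e (m+2)).submatrix (Fin.last (m+1)).succAbove
      (Fin.last (m+1)).succAbove) = tri d e (m+1) := by
    rw [Fin.succAbove_last]
    ext i j
    simp [tri, Matrix.submatrix_apply]
  set a : Fin (m+2) := ⟨m, by omega⟩ with ha
  have hab : a ≠ Fin.last (m+1) := by simp [Fin.ext_iff, ha]
  rw [Matrix.det_succ_row _ (Fin.last (m+1)),
      sum_two _ a (Fin.last (m+1)) hab ?vanish]
  case vanish =>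
    intro k hka hkl
    have h1 : (tri d e (m+2)) (Fin.last (m+1)) k = 0 := by
      have hv1 : k.val ≠ m := fun h => hka (Fin.ext h)
      have hv2 : k.val ≠ m + 1 := fun h => hkl (Fin.ext h)
      have : k.val < m + 2 := k.isLt
      simp only [tri, Matrix.of_apply, Fin.val_last]
      split_ifs <;> first | rfl | (exfalso; omega)
    rw [h1]; ring
  have e1 : (tri d e (m+2)) (Fin.last (m+1)) (Fin.last (m+1)) = d (m+1) := by
    simp [tri]
  have e2 : (tri d e (m+2)) (Fin.last (m+1)) a = e m := by
    simp only [tri, Matrix.of_apply, Fin.val_last, ha]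
    split_ifs <;> first | rfl | (exfalso; omega)
  have hminor : ((tri d e (m+2)).submatrix (Fin.last (m+1)).succAbove a.succAbove).det
      = e m * (tri d e m).det := by
    rw [Matrix.det_succ_column _ (Fin.last m)]
    rw [Finset.sum_eq_single (Fin.last m)]
    · have hentry : (tri d e (m+2)).submatrix (Fin.last (m+1)).succAbove a.succAbove
          (Fin.last m) (Fin.last m) = e m := by
        simp only [Matrix.submatrix_apply]
        have hr : ((Fin.last (m+1)).succAbove (Fin.last m)).val = m := by
          rw [succAbove_val]; simp
        have hc : (a.succAbove (Fin.last m)).val = m + 1 := by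
          rw [succAbove_val]; simp [ha]
        simp only [tri, Matrix.of_apply, hr, hc]
        split_ifs <;> first | rfl | (exfalso; omega)
      have hinner : (((tri d e (m+2)).submatrix (Fin.last (m+1)).succAbove
            a.succAbove).submatrix (Fin.last m).succAbove (Fin.last m).succAbove)
          = tri d e m := by
        ext i j
        simp only [Matrix.submatrix_apply]
        have hr : ((Fin.last (m+1)).succAbove ((Fin.last m).succAbove i)).val = i.val := by
          rw [succAbove_val, succAbove_val]
          have := i.isLt; simp only [Fin.val_last]
          split_ifs <;> first | rfl | (exfalso; omega)
        have hc : (a.succAbove ((Fin.last m).succAbove j)).val = j.val := by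
          rw [succAbove_val, succAbove_val]
          have := j.isLt; simp only [Fin.val_last, ha]
          split_ifs <;> first | rfl | (exfalso; omega)
        simp only [tri, Matrix.of_apply, hr, hc]
      rw [hentry, hinner]
      simp only [Fin.val_last]
      rw [show m + m = 2 * m from by ring, pow_mul]
      norm_num
    · intro i _ hi
      have h0 : (tri d e (m+2)).submatrix (Fin.last (m+1)).succAbove a.succAbove
          i (Fin.last m) = 0 := by
        simp only [Matrix.submatrix_apply]
        have hr : ((Fin.last (m+1)).succAbove i).val = i.val := by
          rw [succAbove_val]; simp [i.isLt]
        have hc : (a.succAbove (Fin.last m)).val = m + 1 := by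
          rw [succAbove_val]; simp [ha]
        have hiv : i.val ≠ m := fun h => hi (Fin.ext h)
        have := i.isLt
        simp only [tri, Matrix.of_apply, hr, hc]
        split_ifs <;> first | rfl | (exfalso; omega)
      rw [h0]; ring
    · intro h; exact absurd (Finset.mem_univ _) h
  rw [e1, e2, hsub1, hminor]
  simp only [Fin.val_last, ha]
  rw [show (m+1) + m = 2*m+1 from by ring, show (m+1) + (m+1) = 2*(m+1) from by ring,
     pow_mul, pow_succ, pow_mul]
  norm_num
  ring

/-- diagonal of `ζ • conj L − M`. -/
def dd (m : ℕ) (α : ℕ → ℂ) (b ζ : ℂ) : ℕ → ℂ := fun i =>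
  if i = 0 then ζ * (if m = 0 then b else α 0) - 1
  else if i = m then
    (if m % 2 = 0 then ζ * b + α (m-1)
     else -(ζ * (starRingEnd ℂ) (α (m-1))) - (starRingEnd ℂ) b)
  else if i % 2 = 1 then -(ζ * (starRingEnd ℂ) (α (i-1))) - (starRingEnd ℂ) (α i)
  else ζ * α i + α (i-1)

/-- off-diagonal of `ζ • conj L − M`. -/
def ee (α : ℕ → ℂ) (ζ : ℂ) : ℕ → ℂ := fun i =>
  if i % 2 = 0 then ζ * rho (α i) else -(rho (α i))

lemma minors (m : ℕ) (α : ℕ → ℂ) (b ζ : ℂ) (hα : ∀ j < m, ‖α j‖ < 1) :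
    ∀ k, k ≤ m → (tri (dd m α b ζ) (ee α ζ) k).det
      = (-1:ℂ)^((k+1)/2) * (if k % 2 = 1 then (PQ α ζ k).2 else (PQ α ζ k).1) := by
  intro k
  induction k using Nat.strong_induction_on with
  | _ k ih =>
    match k with
    | 0 => intro _; simp [tri_det_zero, PQ]
    | 1 =>
        intro h1
        rw [tri_det_one]
        have hdd : dd m α b ζ 0 = ζ * α 0 - 1 := by
          simp [dd, show ¬ (m = 0) from by omega]
        rw [hdd]
        simp [PQ]
        ring
    | (k+2) =>
        intro hk2
        rw [tri_det_succ]
        rw [ih (k+1) (by omega) (by omega), ih k (by omega) (by omega)]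
        have hdd : dd m α b ζ (k+1) =
            (if (k+1) % 2 = 1 then -(ζ * (starRingEnd ℂ) (α k)) - (starRingEnd ℂ) (α (k+1))
             else ζ * α (k+1) + α k) := by
          simp only [dd]
          rw [if_neg (by omega), if_neg (by omega)]
          congr 1
        have hee2 : (ee α ζ k)^2 =
            (if k % 2 = 0 then ζ^2 * (1 - (starRingEnd ℂ) (α k) * α k)
             else 1 - (starRingEnd ℂ) (α k) * α k) := by
          simp only [ee]
          split_ifs with h
          · rw [mul_pow, rho_sq (hα k (by omega)).le]
          · rw [neg_pow, rho_sq (hα k (by omega)).le]; ring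
        rw [hdd, hee2]
        rcases Nat.even_or_odd k with ⟨l, hl⟩ | ⟨l, hl⟩
        · -- k = 2l even
          simp only [show (k+1) % 2 = 1 from by omega, show (k+2) % 2 = 0 from by omega,
            show k % 2 = 0 from by omega, show (k+2+1)/2 = l+1 from by omega,
            show (k+1+1)/2 = l+1 from by omega, show (k+1)/2 = l from by omega]
          norm_num
          simp only [PQ]
          rw [pow_succ]
          ring
        · -- k = 2l+1 odd
          simp only [show (k+1) % 2 = 0 from by omega, show (k+2) % 2 = 1 from by omega,
            show k % 2 = 1 from by omega, show (k+2+1)/2 = l+2 from by omega,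
            show (k+1+1)/2 = l+1 from by omega, show (k+1)/2 = l+1 from by omega]
          norm_num
          simp only [PQ]
          rw [pow_succ, pow_succ]
          ring

lemma detT (m : ℕ) (α : ℕ → ℂ) (b ζ : ℂ) (hα : ∀ j < m, ‖α j‖ < 1)
    (hb : ‖b‖ = 1) :
    ∃ c : ℂ, c ≠ 0 ∧ (tri (dd m α b ζ) (ee α ζ) (m+1)).det
      = c * (ζ * (PQ α ζ m).1 - (starRingEnd ℂ) b * (PQ α ζ m).2) := by
  have hbb : (starRingEnd ℂ) b * b = 1 := conj_mul_self_of_abs_one hb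
  have hbne : b ≠ 0 := by
    intro h; rw [h] at hb; simp at hb
  match m, hα with
  | 0, hα =>
      refine ⟨b, hbne, ?_⟩
      rw [tri_det_one]
      have hdd0 : dd 0 α b ζ 0 = ζ * b - 1 := by norm_num [dd]
      rw [hdd0]
      simp only [PQ]
      linear_combination hbb
  | (m'+1), hα =>
      rw [tri_det_succ,
        minors (m'+1) α b ζ hα (m'+1) (le_refl _),
        minors (m'+1) α b ζ hα m' (by omega)]
      have hdd : dd (m'+1) α b ζ (m'+1) =
          (if (m'+1) % 2 = 0 then ζ * b + α m'
           else -(ζ * (starRingEnd ℂ) (α m')) - (starRingEnd ℂ) b) := by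
        simp [dd]
      have hee2 : (ee α ζ m')^2 =
          (if m' % 2 = 0 then ζ^2 * (1 - (starRingEnd ℂ) (α m') * α m')
           else 1 - (starRingEnd ℂ) (α m') * α m') := by
        simp only [ee]
        split_ifs with h
        · rw [mul_pow, rho_sq (hα m' (by omega)).le]
        · rw [neg_pow, rho_sq (hα m' (by omega)).le]; ring
      rw [hdd, hee2]
      rcases Nat.even_or_odd m' with ⟨l, hl⟩ | ⟨l, hl⟩
      · -- m' = 2l even, m = m'+1 odd
        refine ⟨(-1:ℂ)^(l+1), by simp, ?_⟩
        simp only [show (m'+1) % 2 = 1 from by omega, show m' % 2 = 0 from by omega,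
          show (m'+1+1)/2 = l+1 from by omega, show (m'+1)/2 = l from by omega]
        norm_num
        simp only [PQ]
        rw [pow_succ]
        ring
      · -- m' = 2l+1 odd, m = m'+2? no: m = m'+1 even
        refine ⟨(-1:ℂ)^(l+1) * b, by simp [hbne], ?_⟩
        simp only [show (m'+1) % 2 = 0 from by omega, show m' % 2 = 1 from by omega,
          show (m'+1+1)/2 = l+1 from by omega, show (m'+1)/2 = l+1 from by omega]
        norm_num
        simp only [PQ]
        rw [pow_succ]
        linear_combination (-1:ℂ)^l * (ζ * α m' * (PQ α ζ m').1 - (PQ α ζ m').2) * hbb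

section EntryHelpers

variable {m : ℕ} {α : ℕ → ℂ} {b : ℂ}

lemma Lmat_last (hm : m % 2 = 0) {i j : Fin (m+1)} (hi : i.val = m) :
    Lmat m α b i j = if j.val = m then (starRingEnd ℂ) b else 0 := by
  simp only [Lmat, Matrix.of_apply, if_pos (And.intro hm hi)]

lemma Lmat_even {i j : Fin (m+1)} (hi : i.val % 2 = 0) (him : i.val < m) :
    Lmat m α b i j = (if j.val = i.val then (starRingEnd ℂ) (α i.val)
      else if j.val = i.val + 1 then rho (α i.val) else 0) := by
  have hj := j.isLt
  simp only [Lmat, Matrix.of_apply]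
  split_ifs <;> first | rfl | (exfalso; omega)

lemma Lmat_odd {i j : Fin (m+1)} (hi : i.val % 2 = 1) :
    Lmat m α b i j = (if j.val = i.val - 1 then rho (α (i.val - 1))
      else if j.val = i.val then -(α (i.val - 1)) else 0) := by
  have hj := j.isLt
  have hii := i.isLt
  simp only [Lmat, Matrix.of_apply]
  split_ifs <;> first | rfl | (exfalso; omega)

lemma Mmat_zero {i j : Fin (m+1)} (hi : i.val = 0) :
    Mmat m α b i j = if j.val = 0 then 1 else 0 := by
  simp only [Mmat, Matrix.of_apply, if_pos hi]

lemma Mmat_last (hm : m % 2 = 1) {i j : Fin (m+1)} (hi : i.val = m) :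
    Mmat m α b i j = if j.val = m then (starRingEnd ℂ) b else 0 := by
  have hj := j.isLt
  simp only [Mmat, Matrix.of_apply]
  split_ifs <;> first | rfl | (exfalso; omega)

lemma Mmat_odd {i j : Fin (m+1)} (hi : i.val % 2 = 1) (him : i.val < m) :
    Mmat m α b i j = (if j.val = i.val then (starRingEnd ℂ) (α i.val)
      else if j.val = i.val + 1 then rho (α i.val) else 0) := by
  have hj := j.isLt
  simp only [Mmat, Matrix.of_apply]
  split_ifs <;> first | rfl | (exfalso; omega)

lemma Mmat_even {i j : Fin (m+1)} (hi : i.val % 2 = 0) (hi0 : i.val ≠ 0) :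
    Mmat m α b i j = (if j.val = i.val - 1 then rho (α (i.val - 1))
      else if j.val = i.val then -(α (i.val - 1)) else 0) := by
  have hj := j.isLt
  have hii := i.isLt
  simp only [Mmat, Matrix.of_apply]
  split_ifs <;> first | rfl | (exfalso; omega)

end EntryHelpers

lemma L_mul_conjL (m : ℕ) (α : ℕ → ℂ) (b : ℂ)
    (hα : ∀ j < m, ‖α j‖ < 1) (hb : ‖b‖ = 1) :
    Lmat m α b * (Lmat m α b).map (starRingEnd ℂ) = 1 := by
  have hbb : (starRingEnd ℂ) b * b = 1 := conj_mul_self_of_abs_one hb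
  ext i j
  rw [Matrix.mul_apply]
  by_cases hA : m % 2 = 0 ∧ i.val = m
  · rw [Finset.sum_eq_single i]
    · rw [Matrix.map_apply, Lmat_last hA.1 hA.2, Lmat_last hA.1 hA.2,
        if_pos hA.2, Matrix.one_apply]
      by_cases hj : j.val = m
      · rw [if_pos hj, if_pos (Fin.ext (hA.2.trans hj.symm) : i = j), Complex.conj_conj, hbb]
      · rw [if_neg hj, if_neg (fun h : i = j => hj (h ▸ hA.2)), map_zero, mul_zero]
    · intro k _ hk
      rw [Lmat_last hA.1 hA.2, if_neg (fun h : k.val = m => hk (Fin.ext (h.trans hA.2.symm))),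
        zero_mul]
    · intro h; exact absurd (Finset.mem_univ _) h
  · by_cases hE : i.val % 2 = 0
    · -- even row, below m
      have him : i.val < m := by
        have := i.isLt
        rcases Nat.lt_or_ge i.val m with h | h
        · exact h
        · exfalso
          have him : i.val = m := by omega
          rcases Nat.even_or_odd m with hme | hmo
          · exact hA ⟨by omega, him⟩
          · obtain ⟨t, ht⟩ := hmo; omega
      set i1 : Fin (m+1) := ⟨i.val + 1, by omega⟩ with hi1
      have hi1v : i1.val = i.val + 1 := rfl
      have hr2 : rho (α i.val) * rho (α i.val)
          = 1 - (starRingEnd ℂ) (α i.val) * α i.val := by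
        rw [← pow_two, rho_sq (hα i.val him).le]
      rw [sum_two _ i i1 (by simp [Fin.ext_iff, hi1v]) ?hside]
      case hside =>
        intro k hk1 hk2
        rw [Lmat_even hE him, if_neg (fun h : k.val = i.val => hk1 (Fin.ext h)),
          if_neg (fun h : k.val = i.val + 1 => hk2 (Fin.ext h)), zero_mul]
      rw [Matrix.map_apply, Matrix.map_apply,
        Lmat_even hE him (j := i), Lmat_even hE him (j := i1),
        Lmat_even hE him (j := j),
        Lmat_odd (i := i1) (j := j) (show i1.val % 2 = 1 by rw [hi1v]; omega),
        Matrix.one_apply]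
      simp only [hi1v, Nat.add_sub_cancel, Fin.ext_iff]
      split_ifs <;>
        first
          | (exfalso; omega)
          | (simp only [map_zero, map_neg, mul_zero, zero_mul, add_zero, zero_add,
              Complex.conj_conj, conj_rho]
             try linear_combination hr2
             try ring1)
    · -- odd row
      have hO : i.val % 2 = 1 := by omega
      have hi1 : 1 ≤ i.val := by omega
      have him : i.val - 1 < m := by
        have := i.isLt
        rcases Nat.lt_or_ge i.val m with h | h
        · omega
        · have him : i.val = m := by omega
          rcases Nat.even_or_odd m with hme | hmo
          · obtain ⟨t, ht⟩ := hme; omega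
          · omega
      set i0 : Fin (m+1) := ⟨i.val - 1, by omega⟩ with hi0
      have hi0v : i0.val = i.val - 1 := rfl
      have hr2 : rho (α (i.val - 1)) * rho (α (i.val - 1))
          = 1 - (starRingEnd ℂ) (α (i.val - 1)) * α (i.val - 1) := by
        rw [← pow_two, rho_sq (hα (i.val - 1) him).le]
      rw [sum_two _ i0 i (by simp [Fin.ext_iff]; omega) ?hside]
      case hside =>
        intro k hk1 hk2
        rw [Lmat_odd hO, if_neg (fun h : k.val = i.val - 1 => hk1 (Fin.ext h)),
          if_neg (fun h : k.val = i.val => hk2 (Fin.ext h)), zero_mul]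
      rw [Matrix.map_apply, Matrix.map_apply,
        Lmat_odd hO (j := i0), Lmat_odd hO (j := i),
        Lmat_odd hO (j := j),
        Lmat_even (i := i0) (j := j) (show i0.val % 2 = 0 by rw [hi0v]; omega)
          (show i0.val < m by rw [hi0v]; omega),
        Matrix.one_apply]
      simp only [hi0v, show i.val - 1 + 1 = i.val from by omega, Fin.ext_iff]
      split_ifs <;>
        first
          | (exfalso; omega)
          | (simp only [map_zero, map_neg, mul_zero, zero_mul, add_zero, zero_add,
              Complex.conj_conj, conj_rho]
             try linear_combination hr2
             try ring1)

set_option maxHeartbeats 1000000 in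
lemma T_eq (m : ℕ) (α : ℕ → ℂ) (b ζ : ℂ) :
    ζ • (Lmat m α b).map (starRingEnd ℂ) - Mmat m α b
      = tri (dd m α b ζ) (ee α ζ) (m+1) := by
  ext i j
  have hjlt := j.isLt
  have hilt := i.isLt
  simp only [Matrix.sub_apply, Matrix.smul_apply, Matrix.map_apply, smul_eq_mul]
  by_cases hi0 : i.val = 0
  · by_cases hm0 : m = 0
    · rw [Lmat_last (by omega) (by omega), Mmat_zero hi0]
      rw [tri_apply']
      simp only [dd, ee, hm0]
      split_ifs <;>
        first
          | (exfalso; omega)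
          | (simp only [map_zero, map_neg, Complex.conj_conj, conj_rho] <;> ring1)
          | (exfalso; exact ‹False›)
    · rw [Lmat_even (by omega) (by omega), Mmat_zero hi0]
      rw [tri_apply']
      simp only [dd, ee, hi0]
      split_ifs <;>
        first
          | (exfalso; omega)
          | (simp only [map_zero, map_neg, Complex.conj_conj, conj_rho] <;> ring1)
          | (exfalso; exact ‹False›)
  · by_cases him : i.val = m
    · rcases Nat.even_or_odd m with ⟨t, ht⟩ | ⟨t, ht⟩
      · rw [Lmat_last (by omega) him, Mmat_even (by omega) (by omega)]
        rw [tri_apply']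
        simp only [dd, ee, him]
        split_ifs <;>
          first
            | (exfalso; omega)
            | (simp only [map_zero, map_neg, Complex.conj_conj, conj_rho] <;> ring1)
            | (exfalso; exact ‹False›)
      · rw [Lmat_odd (by omega), Mmat_last (by omega) him]
        rw [tri_apply']
        simp only [dd, ee, him]
        split_ifs <;>
          first
            | (exfalso; omega)
            | (simp only [map_zero, map_neg, Complex.conj_conj, conj_rho] <;> ring1)
            | (exfalso; exact ‹False›)
    · rcases Nat.even_or_odd i.val with ⟨t, ht⟩ | ⟨t, ht⟩
      · rw [Lmat_even (by omega) (by omega), Mmat_even (by omega) (by omega)]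
        rw [tri_apply']
        simp only [dd, ee]
        split_ifs <;>
          first
            | (exfalso; omega)
            | (simp only [map_zero, map_neg, Complex.conj_conj, conj_rho] <;> ring1)
            | (exfalso; exact ‹False›)
      · rw [Lmat_odd (by omega), Mmat_odd (by omega) (by omega)]
        rw [tri_apply']
        simp only [dd, ee]
        split_ifs <;>
          first
            | (exfalso; omega)
            | (simp only [map_zero, map_neg, Complex.conj_conj, conj_rho] <;> ring1)
            | (exfalso; exact ‹False›)

lemma key (m : ℕ) (α : ℕ → ℂ) (b ζ : ℂ)
    (hα : ∀ j < m, ‖α j‖ < 1) (hb : ‖b‖ = 1)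
    (h : ζ ∈ spectrum ℂ (CMV m α b)) :
    ζ * (PQ α ζ m).1 = (starRingEnd ℂ) b * (PQ α ζ m).2 := by
  have hLLc := L_mul_conjL m α b hα hb
  rw [spectrum.mem_iff] at h
  have hfact : (algebraMap ℂ (Matrix (Fin (m+1)) (Fin (m+1)) ℂ)) ζ - CMV m α b
      = Lmat m α b * (ζ • (Lmat m α b).map (starRingEnd ℂ) - Mmat m α b) := by
    rw [Matrix.mul_sub, Matrix.mul_smul, hLLc, CMV, Algebra.algebraMap_eq_smul_one]
  have hdet0 : ((algebraMap ℂ (Matrix (Fin (m+1)) (Fin (m+1)) ℂ)) ζ - CMV m α b).det = 0 := by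
    by_contra hne
    exact h ((Matrix.isUnit_iff_isUnit_det _).mpr (isUnit_iff_ne_zero.mpr hne))
  rw [hfact, Matrix.det_mul, T_eq] at hdet0
  obtain ⟨c, hc, hdetT⟩ := detT m α b ζ hα hb
  rw [hdetT] at hdet0
  have hLdet : (Lmat m α b).det ≠ 0 := by
    have h1 : (Lmat m α b).det * ((Lmat m α b).map (starRingEnd ℂ)).det = 1 := by
      rw [← Matrix.det_mul, hLLc, Matrix.det_one]
    exact left_ne_zero_of_mul_eq_one h1
  rcases mul_eq_zero.mp hdet0 with h' | h'
  · exact absurd h' hLdet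
  · rcases mul_eq_zero.mp h' with h'' | h''
    · exact absurd h'' hc
    · exact sub_eq_zero.mp h''

end CMVaux

open CMVaux in
/-- `C(α₀,…,α_{n-1},bₙ)` and `C(α₀,…,α_{n-2},b_{n-1})` have at most one common eigenvalue,
and any common eigenvalue equals `b̄ₙ γ_{n-1}` with
`γ_{n-1} = (α_{n-1} - b_{n-1})/(ᾱ_{n-1} b_{n-1} - 1)`. -/
theorem stmt_15 (n : ℕ) (hn : 1 ≤ n) (α : ℕ → ℂ) (hα : ∀ j < n, ‖α j‖ < 1)
    (bn bm : ℂ) (hbn : ‖bn‖ = 1) (hbm : ‖bm‖ = 1) :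
    ∀ ζ : ℂ, ζ ∈ spectrum ℂ (CMV n α bn) → ζ ∈ spectrum ℂ (CMV (n - 1) α bm) →
      ζ = (starRingEnd ℂ) bn *
        ((α (n - 1) - bm) / ((starRingEnd ℂ) (α (n - 1)) * bm - 1)) := by
  intro ζ h1 h2
  have k1 := key n α bn ζ hα hbn h1
  have k2 := key (n-1) α bm ζ (fun j hj => hα j (by omega)) hbm h2
  have hn1 : n - 1 + 1 = n := by omega
  rw [← hn1] at k1
  simp only [PQ] at k1
  have hbm0 : bm ≠ 0 := fun h => by simp [h] at hbm
  have hζ : ζ ≠ 0 := by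
    rintro rfl
    rw [zero_mul, PQ_zero_snd] at k2
    rw [mul_one] at k2
    have : (starRingEnd ℂ) bm ≠ 0 :=
      fun h => hbm0 (by simpa using congrArg (starRingEnd ℂ) h)
    exact this k2.symm
  have hq : (PQ α ζ (n-1)).2 ≠ 0 := by
    intro h0
    rw [h0, mul_zero] at k2
    have hp0 : (PQ α ζ (n-1)).1 = 0 := by
      rcases mul_eq_zero.mp k2 with h | h
      · exact absurd h hζ
      · exact h
    exact PQ_ne_zero α ζ hζ (n-1) (fun j hj => hα j (by omega)) ⟨hp0, h0⟩
  have E : ζ * ((starRingEnd ℂ) bm - (starRingEnd ℂ) (α (n-1)))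
      = (starRingEnd ℂ) bn * (1 - α (n-1) * (starRingEnd ℂ) bm) := by
    apply mul_right_cancel₀ hq
    linear_combination k1 - (ζ + (starRingEnd ℂ) bn * α (n-1)) * k2
  have hbb : bm * (starRingEnd ℂ) bm = 1 := by
    rw [mul_comm]; exact conj_mul_self_of_abs_one hbm
  have hden : (starRingEnd ℂ) (α (n-1)) * bm - 1 ≠ 0 := by
    intro h
    have h1' : (starRingEnd ℂ) (α (n-1)) * bm = 1 := by
      rw [sub_eq_zero] at h; exact h
    have habs : ‖(starRingEnd ℂ) (α (n-1)) * bm‖ = 1 := by rw [h1']; simp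
    rw [norm_mul, Complex.norm_conj, hbm, mul_one] at habs
    exact absurd habs (ne_of_lt (hα (n-1) (by omega)))
  have goal' : ζ * ((starRingEnd ℂ) (α (n-1)) * bm - 1)
      = (starRingEnd ℂ) bn * (α (n-1) - bm) := by
    linear_combination (-bm) * E + (ζ + (starRingEnd ℂ) bn * α (n-1)) * hbb
  rw [← mul_div_assoc, eq_div_iff hden]
  linear_combination goal'
end
end
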